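/- arXiv:1404.6962 — 5 statements merged into one kernel-verified Lean document; each statement's English description precedes it below -/
import Mathlib

section
/- Let n and ℓ be positive integers with ℓ ≤ n, let (E, ≤) be a totally ordered finite set of cardinality n, let f : E → ℝ≥0, and let s = Σ_{x ∈ E} f(x). Then Σ_{x_1 < x_2 < … < x_ℓ} f(x_1) f(x_2) ⋯ f(x_ℓ) ≤ C(n, ℓ) (s/n)^ℓ, where the sum ranges over all strictly increasing ℓ-tuples of elements of E and C(n, ℓ) is the binomial coefficient; equivalently, the sum over all ℓ-element subsets of E of the product of the values of f on the subset is at most C(n, ℓ) (s/n)^ℓ. -/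
open Classical

private lemma pow_sub_pow_le_aux {a u : ℝ} (ha : 0 ≤ a) (hau : a ≤ u) (k : ℕ) :
    u ^ k - a ^ k ≤ k * (u - a) * u ^ (k - 1) := by
  rcases Nat.eq_zero_or_pos k with hk | hk
  · simp [hk]
  have h := geom_sum₂_mul u a k
  rw [← h]
  have hu : 0 ≤ u := ha.trans hau
  have hbound : (∑ i ∈ Finset.range k, u ^ i * a ^ (k - 1 - i)) ≤ k * u ^ (k - 1) := by
    calc (∑ i ∈ Finset.range k, u ^ i * a ^ (k - 1 - i))
        ≤ ∑ _i ∈ Finset.range k, u ^ (k - 1) := by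
          apply Finset.sum_le_sum
          intro i hi
          rw [Finset.mem_range] at hi
          calc u ^ i * a ^ (k - 1 - i) ≤ u ^ i * u ^ (k - 1 - i) := by
                apply mul_le_mul_of_nonneg_left (pow_le_pow_left₀ ha hau _) (pow_nonneg hu _)
            _ = u ^ (k - 1) := by
                rw [← pow_add]; congr 1; omega
      _ = k * u ^ (k - 1) := by rw [Finset.sum_const, Finset.card_range, nsmul_eq_mul]
  have hge : (0:ℝ) ≤ u - a := by linarith
  calc (∑ i ∈ Finset.range k, u ^ i * a ^ (k - 1 - i)) * (u - a)
      ≤ (k * u ^ (k - 1)) * (u - a) := mul_le_mul_of_nonneg_right hbound hge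
    _ = k * (u - a) * u ^ (k - 1) := by ring

private lemma alg_key (n ℓ : ℕ) (hℓ : 1 ≤ ℓ) (hn : ℓ ≤ n) (h2 : 2 ≤ n)
    {a m u : ℝ} (hm : 0 ≤ m) (hma : m ≤ a) (hu : (n : ℝ) * a = m + ((n : ℝ) - 1) * u) :
    ((n - 1).choose ℓ : ℝ) * u ^ ℓ + m * ((n - 1).choose (ℓ - 1) : ℝ) * u ^ (ℓ - 1)
      ≤ (n.choose ℓ : ℝ) * a ^ ℓ := by
  have hn1 : (1:ℝ) ≤ (n:ℝ) - 1 := by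
    have : (2:ℝ) ≤ (n:ℝ) := by exact_mod_cast h2
    linarith
  have hau : a ≤ u := by nlinarith
  have ha : 0 ≤ a := hm.trans hma
  have hun : 0 ≤ u := ha.trans hau
  have husub : (0:ℝ) ≤ u - a := by linarith
  have hd : ((n:ℝ) - 1) * (u - a) = a - m := by linarith [hu]
  set A : ℝ := ((n - 1).choose ℓ : ℝ) with hA
  set B : ℝ := ((n - 1).choose (ℓ - 1) : ℝ) with hB
  set P : ℝ := u ^ (ℓ - 1) with hP
  have hPn : 0 ≤ P := pow_nonneg hun _
  have hAnn : 0 ≤ A := by positivity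
  have hBnn : 0 ≤ B := by positivity
  -- Pascal
  have hCnat : n.choose ℓ = (n - 1).choose (ℓ - 1) + (n - 1).choose ℓ := by
    have h := Nat.choose_succ_succ (n - 1) (ℓ - 1)
    simp only [Nat.succ_eq_add_one] at h
    rw [show n - 1 + 1 = n by omega, show ℓ - 1 + 1 = ℓ by omega] at h
    exact h
  have hC : (n.choose ℓ : ℝ) = B + A := by rw [hA, hB, hCnat]; push_cast; ring
  -- identity ℓ * A = (n - ℓ) * B
  have hid : (ℓ : ℝ) * A = ((n : ℝ) - ℓ) * B := by
    have h := Nat.choose_succ_right_eq (n - 1) (ℓ - 1)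
    rw [show ℓ - 1 + 1 = ℓ by omega] at h
    have h' : (n - 1).choose ℓ * ℓ = (n - 1).choose (ℓ - 1) * (n - ℓ) := by
      rw [h]; congr 1; omega
    have hcast := congrArg (fun x : ℕ => (x : ℝ)) h'
    push_cast [Nat.cast_sub hn] at hcast
    rw [hA, hB]; linarith [hcast]
  have hup : u ^ ℓ = u * P := by rw [hP, ← pow_succ']; congr 1; omega
  have h1 : u ^ ℓ - a ^ ℓ ≤ (ℓ:ℝ) * (u - a) * P := pow_sub_pow_le_aux ha hau ℓ
  have h2' : a * P - a ^ ℓ ≤ ((ℓ:ℝ) - 1) * (u - a) * P := by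
    rcases Nat.eq_or_lt_of_le hℓ with h | h
    · rw [hP, ← h]; simp
    · have hℓ2 : 2 ≤ ℓ := h
      have hk := pow_sub_pow_le_aux ha hau (ℓ - 1)
      have e1 : a ^ ℓ = a * a ^ (ℓ - 1) := by rw [← pow_succ']; congr 1; omega
      have e2 : P = u * u ^ (ℓ - 1 - 1) := by rw [hP, ← pow_succ']; congr 1; omega
      have hc : (0:ℝ) ≤ ((ℓ - 1 : ℕ) : ℝ) * (u - a) := by positivity
      have hmu : a * u ^ (ℓ - 1 - 1) ≤ u * u ^ (ℓ - 1 - 1) :=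
        mul_le_mul_of_nonneg_right hau (pow_nonneg hun _)
      have hka := mul_le_mul_of_nonneg_left hk ha
      have hstep := mul_le_mul_of_nonneg_left hmu hc
      have hcast : ((ℓ - 1 : ℕ) : ℝ) = (ℓ:ℝ) - 1 := by push_cast [Nat.cast_sub hℓ]; ring
      rw [hcast] at hk
      -- a*(u^(ℓ-1)) - a^ℓ ≤ a*(ℓ-1)(u-a)u^(ℓ-1-1) ≤ (ℓ-1)(u-a)*u*u^(ℓ-1-1) = (ℓ-1)(u-a)P
      rw [e1, e2]
      rw [hcast] at hstep
      nlinarith [mul_le_mul_of_nonneg_left hk ha]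
  have H1 : A * (u ^ ℓ - a ^ ℓ) ≤ A * ((ℓ:ℝ) * (u - a) * P) := mul_le_mul_of_nonneg_left h1 hAnn
  have H2 : B * (a * P - a ^ ℓ) ≤ B * (((ℓ:ℝ) - 1) * (u - a) * P) := mul_le_mul_of_nonneg_left h2' hBnn
  have E1 : B * (a - m) * P = B * ((n:ℝ) - 1) * ((u - a) * P) := by linear_combination (B * P) * hd.symm
  have E2 : A * ((ℓ:ℝ) * (u - a) * P) + B * (((ℓ:ℝ) - 1) * (u - a) * P)
      = B * ((n:ℝ) - 1) * ((u - a) * P) := by linear_combination ((u - a) * P) * hid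
  rw [hC, hup]
  nlinarith [H1, H2, E1, E2]


private lemma esymm_le_aux {ι : Type} [DecidableEq ι] (f : ι → ℝ) (hf : ∀ x, 0 ≤ f x) :
    ∀ (n : ℕ) (s : Finset ι), s.card = n → ∀ ℓ : ℕ, 0 < ℓ → ℓ ≤ n →
      ∑ S ∈ s.powersetCard ℓ, ∏ x ∈ S, f x
        ≤ (n.choose ℓ : ℝ) * ((∑ x ∈ s, f x) / n) ^ ℓ := by
  intro n
  induction n with
  | zero => intro s hs ℓ h1 h2; omega
  | succ n ih =>
    intro s hs ℓ hℓ hn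
    have prodnn : ∀ T : Finset ι, (0:ℝ) ≤ ∏ x ∈ T, f x :=
      fun T => Finset.prod_nonneg fun x _ => hf x
    have hnpos : (0:ℝ) < (n:ℝ) + 1 := by positivity
    match ℓ, hℓ with
    | 1, _ =>
      rw [Finset.powersetCard_one, Finset.sum_map]
      simp only [Function.Embedding.coeFn_mk, Finset.prod_singleton, Nat.choose_one_right,
        pow_one]
      rw [Nat.cast_add, Nat.cast_one, mul_comm, div_mul_cancel₀ _ (ne_of_gt hnpos)]
    | (k+2), _ =>
      have hne : s.Nonempty := Finset.card_pos.mp (by omega)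
      obtain ⟨y, hy, hmin⟩ := s.exists_min_image f hne
      set t := s.erase y with ht
      have hyt : y ∉ t := Finset.notMem_erase y s
      have hins : insert y t = s := Finset.insert_erase hy
      have htc : t.card = n := by rw [ht, Finset.card_erase_of_mem hy, hs]; omega
      set σ := ∑ x ∈ s, f x with hσ
      set m := f y with hmdef
      have hm : 0 ≤ m := hf y
      have hσt : ∑ x ∈ t, f x = σ - m := by
        have h := Finset.add_sum_erase s f hy
        rw [← ht] at h
        rw [hσ, hmdef]
        linarith [h]
      have hnk : 1 ≤ n := by omega
      have hnR : (0:ℝ) < (n:ℝ) := by exact_mod_cast hnk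
      set u : ℝ := (σ - m) / n with hudef
      -- split the sum
      have hdisj : Disjoint (t.powersetCard (k+2)) ((t.powersetCard (k+1)).image (insert y)) := by
        rw [Finset.disjoint_left]
        intro S hS1 hS2
        obtain ⟨hsub, -⟩ := Finset.mem_powersetCard.mp hS1
        obtain ⟨T, hT, hTe⟩ := Finset.mem_image.mp hS2
        exact hyt (hsub (hTe ▸ Finset.mem_insert_self y T))
      have hsplit : ∑ S ∈ s.powersetCard (k+2), ∏ x ∈ S, f x
          = ∑ S ∈ t.powersetCard (k+2), ∏ x ∈ S, f x
            + m * ∑ S ∈ t.powersetCard (k+1), ∏ x ∈ S, f x := by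
        rw [← hins, Finset.powersetCard_succ_insert hyt, Finset.sum_union hdisj]
        congr 1
        rw [Finset.sum_image, Finset.mul_sum]
        · apply Finset.sum_congr rfl
          intro S hS
          obtain ⟨hsub, -⟩ := Finset.mem_powersetCard.mp hS
          rw [Finset.prod_insert (fun hc => hyt (hsub hc))]
        · intro S hS S' hS' hEq
          obtain ⟨hsub, -⟩ := Finset.mem_powersetCard.mp hS
          obtain ⟨hsub', -⟩ := Finset.mem_powersetCard.mp hS'
          have h1 : y ∉ S := fun hc => hyt (hsub hc)
          have h2 : y ∉ S' := fun hc => hyt (hsub' hc)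
          rw [← Finset.erase_insert h1, ← Finset.erase_insert h2, hEq]
      -- bounds from induction hypothesis
      have hb2 : ∑ S ∈ t.powersetCard (k+1), ∏ x ∈ S, f x
          ≤ (n.choose (k+1) : ℝ) * u ^ (k+1) := by
        have h := ih t htc (k+1) (by omega) (by omega)
        rwa [hσt, ← hudef] at h
      have hb1 : ∑ S ∈ t.powersetCard (k+2), ∏ x ∈ S, f x
          ≤ (n.choose (k+2) : ℝ) * u ^ (k+2) := by
        rcases le_or_gt (k+2) n with h | h
        · have h' := ih t htc (k+2) (by omega) h
          rwa [hσt, ← hudef] at h'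
        · have he : t.powersetCard (k+2) = ∅ :=
            Finset.powersetCard_eq_empty.mpr (by omega)
          rw [he, Finset.sum_empty, Nat.choose_eq_zero_of_lt (by omega)]
          simp
      -- apply the algebraic key lemma
      have halg := alg_key (n+1) (k+2) (by omega) hn (by omega)
        (a := σ / (n+1)) (m := m) (u := u) hm ?_ ?_
      · rw [hsplit]
        have hstep : ∑ S ∈ t.powersetCard (k+2), ∏ x ∈ S, f x
              + m * ∑ S ∈ t.powersetCard (k+1), ∏ x ∈ S, f x
            ≤ (n.choose (k+2) : ℝ) * u ^ (k+2) + m * ((n.choose (k+1) : ℝ) * u ^ (k+1)) :=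
          add_le_add hb1 (mul_le_mul_of_nonneg_left hb2 hm)
        have e : n + 1 - 1 = n := by omega
        have e2 : k + 2 - 1 = k + 1 := by omega
        rw [e, e2] at halg
        push_cast at halg hstep ⊢
        linarith
      · -- m ≤ σ / (n+1)
        have hcard : (s.card : ℝ) * m ≤ σ := by
          have h := Finset.card_nsmul_le_sum s f m (fun x hx => hmin x hx)
          rw [nsmul_eq_mul] at h
          exact h
        rw [hs] at hcard
        rw [le_div_iff₀ hnpos]
        push_cast at hcard
        linarith
      · -- (n+1) * (σ/(n+1)) = m + n * u
        rw [hudef]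
        push_cast
        field_simp
        ring

/-- If `f : E → ℝ≥0` on a totally ordered finite set `E` with `|E| = n` sums up to `s`,
then the sum over all strictly increasing `ℓ`-tuples (equivalently, over all `ℓ`-element
subsets) of the products of the values of `f` is at most `C(n,ℓ) (s/n)^ℓ`. -/
theorem sum_products_le_binomial (n ℓ : ℕ) (hℓ : 0 < ℓ) (hn : ℓ ≤ n)
    (E : Type) [Fintype E] [LinearOrder E] (hE : Fintype.card E = n)
    (f : E → ℝ) (hf : ∀ x, 0 ≤ f x) :
    ∑ S ∈ Finset.powersetCard ℓ (Finset.univ : Finset E), ∏ x ∈ S, f x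
      ≤ (n.choose ℓ : ℝ) * ((∑ x, f x) / n) ^ ℓ := by
  have hcard : (Finset.univ : Finset E).card = n := hE
  exact esymm_le_aux f hf n Finset.univ hcard ℓ hℓ hn
end

section
/- Fix a real number ε > 0. There exists N such that for every n ≥ N and every probability mass function p on [n], a random p-mapping of size n has more than n^{1/2+ε} cyclic points or height greater than n^{1/2+ε} with probability at most exp(−n^ε). -/
open Classical

/-- A point `x` is cyclic for `f` if some positive iterate of `f` sends `x` to itself. -/
def IsCyclicPt {n : ℕ} (f : Fin n → Fin n) (x : Fin n) : Prop :=
  ∃ i > 0, f^[i] x = x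

/-- The set of cyclic points of a mapping `f` on `[n]`. -/
noncomputable def cyclicPts {n : ℕ} (f : Fin n → Fin n) : Finset (Fin n) :=
  Finset.univ.filter (IsCyclicPt f)

/-- The height of a point `x`: the least `i ≥ 0` such that `f^[i] x` is cyclic. -/
noncomputable def heightOf {n : ℕ} (f : Fin n → Fin n) (x : Fin n) : ℕ :=
  sInf {i : ℕ | IsCyclicPt f (f^[i] x)}

/-- The height of a mapping: the maximal height of a point. -/
noncomputable def height {n : ℕ} (f : Fin n → Fin n) : ℕ :=
  Finset.univ.sup (heightOf f)

noncomputable def Ek {n : ℕ} (p : Fin n → ℝ) (k : ℕ) : ℝ :=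
  ∑ T ∈ Finset.powersetCard k (Finset.univ : Finset (Fin n)), ∏ j ∈ T, p j

section Helpers
open Finset


variable {β ι : Type*}

lemma sum_biUnion_le' [DecidableEq β] (s : Finset ι) (t : ι → Finset β)
    (g : β → ℝ) (hg : ∀ b, 0 ≤ g b) :
    ∑ b ∈ s.biUnion t, g b ≤ ∑ a ∈ s, ∑ b ∈ t a, g b := by
  induction s using Finset.induction with
  | empty => simp
  | insert a s h ih =>
    rw [Finset.biUnion_insert, Finset.sum_insert h]
    have h1 : ∑ b ∈ t a ∪ s.biUnion t, g b ≤ ∑ b ∈ t a, g b + ∑ b ∈ s.biUnion t, g b := by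
      rw [← Finset.union_sdiff_self_eq_union, Finset.sum_union Finset.disjoint_sdiff]
      have h2 : ∑ b ∈ s.biUnion t \ t a, g b ≤ ∑ b ∈ s.biUnion t, g b :=
        Finset.sum_le_sum_of_subset_of_nonneg (Finset.sdiff_subset) (fun b _ _ => hg b)
      linarith
    exact h1.trans (by linarith)

lemma union_bound [DecidableEq β] (E : Finset β) (s : Finset ι) (C : ι → Finset β)
    (W : β → ℝ) (hW : ∀ f, 0 ≤ W f) (hcov : ∀ f ∈ E, ∃ w ∈ s, f ∈ C w) :
    ∑ f ∈ E, W f ≤ ∑ w ∈ s, ∑ f ∈ C w, W f := by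
  have hsub : E ⊆ s.biUnion C := fun f hf => Finset.mem_biUnion.2 (hcov f hf)
  exact (Finset.sum_le_sum_of_subset_of_nonneg hsub (fun b _ _ => hW b)).trans
    (sum_biUnion_le' s C W hW)

lemma cyl_sum {n : ℕ} (p : Fin n → ℝ) (hp1 : ∑ i, p i = 1)
    (S : Finset (Fin n)) (g : Fin n → Fin n) :
    ∑ f ∈ Finset.univ.filter (fun f : Fin n → Fin n => ∀ i ∈ S, f i = g i), ∏ i, p (f i)
      = ∏ i ∈ S, p (g i) := by
  classical
  have he : Finset.univ.filter (fun f : Fin n → Fin n => ∀ i ∈ S, f i = g i)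
      = Fintype.piFinset (fun i => if i ∈ S then {g i} else Finset.univ) := by
    ext f
    simp only [Finset.mem_filter, Finset.mem_univ, true_and, Fintype.mem_piFinset]
    constructor
    · intro h i
      by_cases hi : i ∈ S <;> simp [hi, h i]
    · intro h i hi
      have := h i
      simpa [hi] using this
  rw [he, ← Finset.prod_univ_sum]
  have : ∀ i, (∑ j ∈ (if i ∈ S then {g i} else Finset.univ), p j)
      = if i ∈ S then p (g i) else 1 := by
    intro i; by_cases hi : i ∈ S <;> simp [hi, hp1]
  rw [Finset.prod_congr rfl (fun i _ => this i)]
  simp [Finset.prod_ite_mem, Finset.univ_inter]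


lemma cyl_sum' {n r : ℕ} (p : Fin n → ℝ) (hp1 : ∑ i, p i = 1)
    (c v : Fin r → Fin n) (hc : Function.Injective c) :
    ∑ f ∈ Finset.univ.filter (fun f : Fin n → Fin n => ∀ i, f (c i) = v i), ∏ i, p (f i)
      = ∏ i, p (v i) := by
  classical
  set g : Fin n → Fin n := fun j => if h : ∃ i, c i = j then v h.choose else j with hg
  have hgc : ∀ i, g (c i) = v i := by
    intro i
    have h : ∃ i', c i' = c i := ⟨i, rfl⟩
    have : h.choose = i := hc h.choose_spec
    simp [hg, dif_pos h, this]
  have he : (Finset.univ.filter (fun f : Fin n → Fin n => ∀ i, f (c i) = v i))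
      = Finset.univ.filter (fun f : Fin n → Fin n => ∀ j ∈ Finset.image c Finset.univ, f j = g j) := by
    ext f
    simp only [Finset.mem_filter, Finset.mem_univ, true_and, Finset.mem_image]
    constructor
    · rintro h j hj
      rcases hj with ⟨i, -, rfl⟩
      rw [h i, hgc i]
    · intro h i
      rw [h (c i) ⟨i, rfl⟩, hgc i]
  rw [he, cyl_sum p hp1, Finset.prod_image (fun a _ b _ h => hc h)]
  exact Finset.prod_congr rfl fun i _ => by rw [hgc i]

-- cyclic points structure
lemma cyclic_image {n : ℕ} (f : Fin n → Fin n) : (cyclicPts f).image f = cyclicPts f := by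
  apply Finset.Subset.antisymm
  · intro y hy
    rcases Finset.mem_image.1 hy with ⟨x, hx, rfl⟩
    rcases (Finset.mem_filter.1 hx).2 with ⟨i, hi, hfx⟩
    refine Finset.mem_filter.2 ⟨Finset.mem_univ _, ⟨i, hi, ?_⟩⟩
    rw [← Function.iterate_succ_apply, Function.iterate_succ_apply', hfx]
  · intro y hy
    rcases (Finset.mem_filter.1 hy).2 with ⟨i, hi, hfy⟩
    obtain ⟨j, rfl⟩ : ∃ j, i = j + 1 := ⟨i - 1, (Nat.succ_pred_eq_of_pos hi).symm⟩
    refine Finset.mem_image.2 ⟨f^[j] y, ?_, ?_⟩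
    · refine Finset.mem_filter.2 ⟨Finset.mem_univ _, ⟨j + 1, hi, ?_⟩⟩
      calc f^[j+1] (f^[j] y) = f^[j] (f^[j+1] y) := by
            rw [← Function.iterate_add_apply, ← Function.iterate_add_apply, Nat.add_comm]
        _ = f^[j] y := by rw [hfy]
    · rw [← Function.iterate_succ_apply' f j y]; exact hfy

lemma exists_cyclic_iterate {n : ℕ} (f : Fin n → Fin n) (x : Fin n) :
    ∃ i < n, IsCyclicPt f (f^[i] x) := by
  have hcard : Fintype.card (Fin n) < Fintype.card (Fin (n+1)) := by simp
  obtain ⟨a, b, hab, heq⟩ := Fintype.exists_ne_map_eq_of_card_lt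
    (fun j : Fin (n+1) => f^[(j : ℕ)] x) hcard
  wlog hlt : (a : ℕ) < (b : ℕ) generalizing a b
  · exact this b a hab.symm heq.symm (by omega : (b:ℕ) < (a:ℕ))
  refine ⟨a, by omega, ⟨(b : ℕ) - a, by omega, ?_⟩⟩
  rw [← Function.iterate_add_apply, Nat.sub_add_cancel hlt.le]
  exact heq.symm

lemma heightOf_lt {n : ℕ} (f : Fin n → Fin n) (x : Fin n) : heightOf f x < n := by
  obtain ⟨i, hi, hc⟩ := exists_cyclic_iterate f x
  exact lt_of_le_of_lt (Nat.sInf_le hc) hi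

lemma iterate_inj_of_le_heightOf {n : ℕ} (f : Fin n → Fin n) (x : Fin n) (K : ℕ)
    (hK : K ≤ heightOf f x) : ∀ i < K, ∀ j < K, f^[i] x = f^[j] x → i = j := by
  have hnc : ∀ i < K, ¬ IsCyclicPt f (f^[i] x) := by
    intro i hi hc
    have h2 : heightOf f x ≤ i := Nat.sInf_le hc
    omega
  intro i hi j hj heq
  by_contra hne
  wlog hlt : i < j generalizing i j
  · exact this j hj i hi heq.symm (Ne.symm hne) (by omega)
  exact hnc i hi ⟨j - i, by omega, by
    rw [← Function.iterate_add_apply, Nat.sub_add_cancel hlt.le]; exact heq.symm⟩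

lemma exists_high_point {n : ℕ} (f : Fin n → Fin n) (K : ℕ) (hK : 0 < K)
    (h : K ≤ height f) : ∃ x, K ≤ heightOf f x := by
  by_contra hc
  push_neg at hc
  have : height f < K := by
    apply (Finset.sup_lt_iff (by simpa using hK)).2
    intro x _; exact hc x
  omega


lemma one_add_le_exp_sub (x : ℝ) (h0 : 0 ≤ x) (h1 : x ≤ 1) :
    1 + x ≤ Real.exp (x - x^2/9) := by
  have hP : (0:ℝ) < (1 + x/2)^2 := by positivity
  have hP9 : (1 + x/2)^2 ≤ 9/4 := by nlinarith
  have h2 : (1 + x/2)^2 ≤ Real.exp x := by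
    have := Real.add_one_le_exp (x/2)
    calc (1 + x/2)^2 ≤ (Real.exp (x/2))^2 := by nlinarith [Real.exp_pos (x/2)]
      _ = Real.exp x := by rw [sq, ← Real.exp_add]; ring_nf
  have h3 : 1 - x^2/(4*(1 + x/2)^2) ≤ Real.exp (-(x^2/(4*(1 + x/2)^2))) := by
    have := Real.add_one_le_exp (-(x^2/(4*(1 + x/2)^2))); linarith
  have h4 : 1 + x = (1 + x/2)^2 * (1 - x^2/(4*(1 + x/2)^2)) := by
    field_simp; ring
  have h5 : 1 + x ≤ Real.exp x * Real.exp (-(x^2/(4*(1 + x/2)^2))) := by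
    rw [h4]
    apply mul_le_mul h2 h3 (by nlinarith) (Real.exp_pos x).le
  have h6 : Real.exp (-(x^2/(4*(1 + x/2)^2))) ≤ Real.exp (-(x^2/9)) := by
    apply Real.exp_le_exp.2
    have h7 : x^2/9 ≤ x^2/(4*(1 + x/2)^2) := by
      apply div_le_div_of_nonneg_left (by positivity) (by positivity) (by nlinarith)
    linarith
  calc 1 + x ≤ Real.exp x * Real.exp (-(x^2/9)) :=
        h5.trans (by exact mul_le_mul_of_nonneg_left h6 (Real.exp_pos x).le)
    _ = Real.exp (x - x^2/9) := by rw [← Real.exp_add]; ring_nf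

lemma factorial_bound (k : ℕ) (hk : 1 ≤ k) :
    (k.factorial : ℝ) * Real.exp k ≤ Real.exp 1 * k * (k:ℝ)^k := by
  induction k with
  | zero => omega
  | succ m ih =>
    rcases Nat.lt_or_ge m 1 with h1 | hm
    · interval_cases m
      norm_num
    · have ihm := ih hm
      have hmr : (1:ℝ) ≤ (m:ℝ) := by exact_mod_cast hm
      set t : ℝ := 1/((m:ℝ)+1) with ht
      have h2 : Real.exp t ≤ ((m:ℝ)+1)/m := by
        have h3 := Real.add_one_le_exp (-t)
        have h5 : 1 - t = (m:ℝ)/((m:ℝ)+1) := by rw [ht]; field_simp; ring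
        have h6 : Real.exp t * Real.exp (-t) = 1 := by rw [← Real.exp_add]; simp
        have hq : (0:ℝ) < (m:ℝ)/((m:ℝ)+1) := by positivity
        have hstep : Real.exp t * ((m:ℝ)/((m:ℝ)+1)) ≤ 1 := by
          calc Real.exp t * ((m:ℝ)/((m:ℝ)+1)) ≤ Real.exp t * Real.exp (-t) := by
                apply mul_le_mul_of_nonneg_left _ (Real.exp_pos t).le
                rw [← h5]; linarith
            _ = 1 := h6
        rw [← mul_le_mul_iff_left₀ hq]
        have hh : ((m:ℝ)+1)/m * ((m:ℝ)/((m:ℝ)+1)) = 1 := by field_simp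
        rw [hh]
        exact hstep
      have key : Real.exp 1 * (m:ℝ)^(m+1) ≤ ((m:ℝ)+1)^(m+1) := by
        have he : Real.exp 1 = (Real.exp t)^(m+1) := by
          rw [← Real.exp_nat_mul, ht]
          congr 1
          field_simp
          push_cast; ring
        have hp : (Real.exp t)^(m+1) ≤ (((m:ℝ)+1)/m)^(m+1) :=
          pow_le_pow_left₀ (Real.exp_pos t).le h2 (m+1)
        have hd : (((m:ℝ)+1)/m)^(m+1) * (m:ℝ)^(m+1) = ((m:ℝ)+1)^(m+1) := by
          rw [div_pow]
          field_simp
        calc Real.exp 1 * (m:ℝ)^(m+1) ≤ (((m:ℝ)+1)/m)^(m+1) * (m:ℝ)^(m+1) := by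
              apply mul_le_mul_of_nonneg_right (he ▸ hp) (by positivity)
          _ = ((m:ℝ)+1)^(m+1) := hd
      have expand : ((m+1).factorial : ℝ) * Real.exp (m+1) = ((m:ℝ)+1) * Real.exp 1 * ((m.factorial : ℝ) * Real.exp m) := by
        rw [Nat.factorial_succ]
        push_cast
        rw [Real.exp_add]
        ring
      have hmm : (0:ℝ) < (m:ℝ)^m := by positivity
      calc ((m+1).factorial : ℝ) * Real.exp ((m:ℕ)+1:ℕ)
          = ((m:ℝ)+1) * Real.exp 1 * ((m.factorial : ℝ) * Real.exp m) := by
            push_cast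
            rw [Real.exp_add]
            push_cast [Nat.factorial_succ]
            ring
        _ ≤ ((m:ℝ)+1) * Real.exp 1 * (Real.exp 1 * m * (m:ℝ)^m) := by
            apply mul_le_mul_of_nonneg_left ihm (by positivity)
        _ = ((m:ℝ)+1) * Real.exp 1 * (Real.exp 1 * (m:ℝ)^(m+1)) := by ring
        _ ≤ ((m:ℝ)+1) * Real.exp 1 * (((m:ℝ)+1)^(m+1)) := by
            apply mul_le_mul_of_nonneg_left key (by positivity)
        _ = Real.exp 1 * ((m:ℕ)+1:ℕ) * (((m:ℕ)+1:ℕ):ℝ)^((m:ℕ)+1:ℕ) := by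
            push_cast; ring
lemma prod_one_add_le {n : ℕ} (hn : 1 ≤ n) (p : Fin n → ℝ) (hp0 : ∀ i, 0 ≤ p i)
    (hp1 : ∑ i, p i = 1) (k : ℕ) (hkn : k ≤ n) :
    ∏ i, (1 + (k:ℝ) * p i) ≤ Real.exp ((k:ℝ) - (k:ℝ)^2/(9*n)) := by
  have hnr : (0:ℝ) < n := by exact_mod_cast hn
  have hn0 : n ≠ 0 := by omega
  set z : Fin n → ℝ := fun i => 1 + (k:ℝ) * p i with hz
  have hz0 : ∀ i ∈ Finset.univ, (0:ℝ) ≤ z i := fun i _ => by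
    have := hp0 i
    have : (0:ℝ) ≤ (k:ℝ) * p i := by positivity
    simp only [hz]; linarith
  have hw : ∑ _i : Fin n, (1:ℝ)/n = 1 := by
    rw [Finset.sum_const, Finset.card_univ, Fintype.card_fin, nsmul_eq_mul]
    field_simp
  have amgm := Real.geom_mean_le_arith_mean_weighted Finset.univ (fun _ => 1/(n:ℝ)) z
    (fun i _ => by positivity) hw hz0
  have hsum : ∑ i, (1:ℝ)/n * z i = 1 + (k:ℝ)/n := by
    calc ∑ i, (1:ℝ)/n * z i = (1/(n:ℝ)) * ∑ i, z i := by rw [Finset.mul_sum]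
      _ = (1/(n:ℝ)) * ((n:ℝ) + (k:ℝ)) := by
          rw [hz]
          simp only []
          rw [Finset.sum_add_distrib, Finset.sum_const, ← Finset.mul_sum, hp1,
            Finset.card_univ, Fintype.card_fin, nsmul_eq_mul]
          ring
      _ = 1 + (k:ℝ)/n := by field_simp
  have hG0 : (0:ℝ) ≤ ∏ i, z i := Finset.prod_nonneg hz0
  have hprod : ∏ i, z i ^ ((1:ℝ)/n) = (∏ i, z i) ^ ((1:ℝ)/n) :=
    Real.finset_prod_rpow Finset.univ z hz0 _
  have hle : (∏ i, z i) ^ ((1:ℝ)/n) ≤ 1 + (k:ℝ)/n := by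
    rw [← hprod, ← hsum]; exact amgm
  have hGle : ∏ i, z i ≤ (1 + (k:ℝ)/n)^n := by
    have h1 : ((∏ i, z i) ^ ((1:ℝ)/n))^n = ∏ i, z i := by
      rw [one_div]
      exact Real.rpow_inv_natCast_pow hG0 hn0
    calc ∏ i, z i = ((∏ i, z i) ^ ((1:ℝ)/n))^n := h1.symm
      _ ≤ (1 + (k:ℝ)/n)^n := pow_le_pow_left₀ (Real.rpow_nonneg hG0 _) hle n
  have hx0 : 0 ≤ (k:ℝ)/n := by positivity
  have hx1 : (k:ℝ)/n ≤ 1 := by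
    rw [div_le_one hnr]; exact_mod_cast hkn
  have hfin : (1 + (k:ℝ)/n)^n ≤ Real.exp ((k:ℝ) - (k:ℝ)^2/(9*n)) := by
    calc (1 + (k:ℝ)/n)^n ≤ (Real.exp ((k:ℝ)/n - ((k:ℝ)/n)^2/9))^n :=
          pow_le_pow_left₀ (by positivity) (one_add_le_exp_sub _ hx0 hx1) n
      _ = Real.exp ((n:ℝ) * ((k:ℝ)/n - ((k:ℝ)/n)^2/9)) := by
          rw [← Real.exp_nat_mul]
      _ = Real.exp ((k:ℝ) - (k:ℝ)^2/(9*n)) := by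
          congr 1
          field_simp
  exact hGle.trans hfin

lemma esymm_bound {n : ℕ} (hn : 1 ≤ n) (p : Fin n → ℝ) (hp0 : ∀ i, 0 ≤ p i)
    (hp1 : ∑ i, p i = 1) (k : ℕ) (hk1 : 1 ≤ k) (hkn : k ≤ n) :
    (k.factorial : ℝ) * Ek p k ≤ Real.exp 1 * n * Real.exp (-((k:ℝ)^2/(9*n))) := by
  unfold Ek
  set Ek : ℝ := ∑ T ∈ Finset.powersetCard k (Finset.univ : Finset (Fin n)), ∏ j ∈ T, p j with hEk
  have hEk0 : 0 ≤ Ek :=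
    Finset.sum_nonneg fun T _ => Finset.prod_nonneg fun j _ => hp0 j
  have hkk : (0:ℝ) < (k:ℝ)^k := by
    have : (0:ℝ) < (k:ℝ) := by exact_mod_cast hk1
    positivity
  -- Step 1 : k^k * Ek ≤ ∏ (1 + k p i)
  have step1 : (k:ℝ)^k * Ek ≤ ∏ i, (1 + (k:ℝ) * p i) := by
    have hexp : ∏ i, ((k:ℝ) * p i + 1) =
        ∑ T ∈ (Finset.univ : Finset (Fin n)).powerset,
          (∏ i ∈ T, (k:ℝ) * p i) * ∏ i ∈ Finset.univ \ T, 1 :=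
      Finset.prod_add _ _ _
    have hterm : ∀ T ∈ Finset.powersetCard k (Finset.univ : Finset (Fin n)),
        (∏ i ∈ T, (k:ℝ) * p i) * ∏ i ∈ Finset.univ \ T, (1:ℝ) = (k:ℝ)^k * ∏ j ∈ T, p j := by
      intro T hT
      have hcard : T.card = k := (Finset.mem_powersetCard.1 hT).2
      rw [Finset.prod_const_one, mul_one, Finset.prod_mul_distrib, Finset.prod_const, hcard]
    calc (k:ℝ)^k * Ek = ∑ T ∈ Finset.powersetCard k (Finset.univ : Finset (Fin n)),
            (∏ i ∈ T, (k:ℝ) * p i) * ∏ i ∈ Finset.univ \ T, 1 := by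
          rw [hEk, Finset.mul_sum]
          exact (Finset.sum_congr rfl hterm).symm
      _ ≤ ∑ T ∈ (Finset.univ : Finset (Fin n)).powerset,
            (∏ i ∈ T, (k:ℝ) * p i) * ∏ i ∈ Finset.univ \ T, 1 := by
          apply Finset.sum_le_sum_of_subset_of_nonneg
          · rw [Finset.powersetCard_eq_filter]
            exact Finset.filter_subset _ _
          · intro T _ _
            apply mul_nonneg
            · exact Finset.prod_nonneg fun i _ => by have := hp0 i; positivity
            · exact Finset.prod_nonneg fun i _ => zero_le_one
      _ = ∏ i, (1 + (k:ℝ) * p i) := by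
          rw [← hexp]
          exact Finset.prod_congr rfl fun i _ => by ring
  have step2 := prod_one_add_le hn p hp0 hp1 k hkn
  have step3 := factorial_bound k hk1
  -- Combine
  have hcomb : (k:ℝ)^k * ((k.factorial : ℝ) * Ek) ≤ (k:ℝ)^k * (Real.exp 1 * n * Real.exp (-((k:ℝ)^2/(9*n)))) := by
    have e1 : (k:ℝ)^k * ((k.factorial : ℝ) * Ek) = (k.factorial : ℝ) * ((k:ℝ)^k * Ek) := by ring
    have e2 : (k.factorial : ℝ) * ((k:ℝ)^k * Ek) ≤ (k.factorial : ℝ) * Real.exp ((k:ℝ) - (k:ℝ)^2/(9*n)) := by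
      apply mul_le_mul_of_nonneg_left (step1.trans step2) (by positivity)
    have e3 : (k.factorial : ℝ) * Real.exp ((k:ℝ) - (k:ℝ)^2/(9*n))
        = ((k.factorial : ℝ) * Real.exp k) * Real.exp (-((k:ℝ)^2/(9*n))) := by
      rw [mul_assoc, ← Real.exp_add]
      ring_nf
    have e4 : ((k.factorial : ℝ) * Real.exp k) * Real.exp (-((k:ℝ)^2/(9*n)))
        ≤ (Real.exp 1 * k * (k:ℝ)^k) * Real.exp (-((k:ℝ)^2/(9*n))) := by
      apply mul_le_mul_of_nonneg_right step3 (Real.exp_pos _).le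
    have e5 : (Real.exp 1 * k * (k:ℝ)^k) * Real.exp (-((k:ℝ)^2/(9*n)))
        ≤ (Real.exp 1 * n * (k:ℝ)^k) * Real.exp (-((k:ℝ)^2/(9*n))) := by
      apply mul_le_mul_of_nonneg_right _ (Real.exp_pos _).le
      have : (k:ℝ) ≤ n := by exact_mod_cast hkn
      rw [mul_assoc, mul_assoc]
      exact mul_le_mul_of_nonneg_left (mul_le_mul_of_nonneg_right this hkk.le) (Real.exp_pos 1).le
    calc (k:ℝ)^k * ((k.factorial : ℝ) * Ek) = (k.factorial : ℝ) * ((k:ℝ)^k * Ek) := e1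
      _ ≤ (k.factorial : ℝ) * Real.exp ((k:ℝ) - (k:ℝ)^2/(9*n)) := e2
      _ = ((k.factorial : ℝ) * Real.exp k) * Real.exp (-((k:ℝ)^2/(9*n))) := e3
      _ ≤ (Real.exp 1 * k * (k:ℝ)^k) * Real.exp (-((k:ℝ)^2/(9*n))) := e4
      _ ≤ (Real.exp 1 * n * (k:ℝ)^k) * Real.exp (-((k:ℝ)^2/(9*n))) := e5
      _ = (k:ℝ)^k * (Real.exp 1 * n * Real.exp (-((k:ℝ)^2/(9*n)))) := by ring
  exact le_of_mul_le_mul_left hcomb hkk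


-- Number of "permutation-like" maps on S is at most |S|!
lemma card_perm_like {n : ℕ} (S : Finset (Fin n)) :
    ((Finset.univ : Finset (Fin n → Fin n)).filter
      (fun σ => S.image σ = S ∧ ∀ j ∉ S, σ j = j)).card ≤ S.card.factorial := by
  classical
  set Sg := (Finset.univ : Finset (Fin n → Fin n)).filter
      (fun σ => S.image σ = S ∧ ∀ j ∉ S, σ j = j) with hSg
  have hinj : ∀ σ ∈ Sg, Set.InjOn σ S := by
    intro σ hσ
    have h := (Finset.mem_filter.1 hσ).2
    apply Finset.injOn_of_card_image_eq
    rw [h.1]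
  have hmem : ∀ σ ∈ Sg, ∀ x : {y // y ∈ S}, σ x ∈ S := by
    intro σ hσ x
    have h := (Finset.mem_filter.1 hσ).2
    have : σ (x : Fin n) ∈ S.image σ := Finset.mem_image_of_mem σ x.2
    rwa [h.1] at this
  let embOf : ∀ σ ∈ Sg, ({y // y ∈ S} ↪ {y // y ∈ S}) := fun σ hσ =>
    ⟨fun x => ⟨σ x, hmem σ hσ x⟩, fun x y hxy =>
      Subtype.ext (hinj σ hσ x.2 y.2 (congrArg Subtype.val hxy))⟩
  let F : (Fin n → Fin n) → ({y // y ∈ S} ↪ {y // y ∈ S}) := fun σ =>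
    if h : σ ∈ Sg then embOf σ h else Function.Embedding.refl _
  have hF : Set.InjOn F Sg := by
    intro σ hσ τ hτ hFeq
    have e1 : F σ = embOf σ hσ := dif_pos hσ
    have e2 : F τ = embOf τ hτ := dif_pos hτ
    rw [e1, e2] at hFeq
    funext j
    by_cases hj : j ∈ S
    · have h2 := congrArg (fun (e : {y // y ∈ S} ↪ {y // y ∈ S}) => ((e : {y // y ∈ S} → {y // y ∈ S}) ⟨j, hj⟩ : Fin n)) hFeq
      exact h2
    · rw [(Finset.mem_filter.1 hσ).2.2 j hj, (Finset.mem_filter.1 hτ).2.2 j hj]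
  calc Sg.card ≤ (Finset.univ : Finset ({y // y ∈ S} ↪ {y // y ∈ S})).card :=
        Finset.card_le_card_of_injOn F (fun σ _ => Finset.mem_univ _) hF
    _ = S.card.factorial := by
        rw [Finset.card_univ, Fintype.card_embedding_eq, Fintype.card_coe,
          Nat.descFactorial_self]

-- sum over injective tuples
lemma tuple_sum_le {n r : ℕ} (p : Fin n → ℝ) (hp0 : ∀ i, 0 ≤ p i) :
    ∑ b ∈ (Finset.univ : Finset (Fin r → Fin n)).filter Function.Injective,
      ∏ i, p (b i)
    ≤ (r.factorial : ℝ) * ∑ T ∈ Finset.powersetCard r (Finset.univ : Finset (Fin n)),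
        ∏ j ∈ T, p j := by
  classical
  set I := (Finset.univ : Finset (Fin r → Fin n)).filter Function.Injective with hI
  have hmap : ∀ b ∈ I, Finset.image b Finset.univ ∈
      Finset.powersetCard r (Finset.univ : Finset (Fin n)) := by
    intro b hb
    rw [Finset.mem_powersetCard]
    refine ⟨Finset.subset_univ _, ?_⟩
    rw [Finset.card_image_of_injective _ (Finset.mem_filter.1 hb).2,
      Finset.card_univ, Fintype.card_fin]
  rw [← Finset.sum_fiberwise_of_maps_to hmap (fun b => ∏ i, p (b i)), Finset.mul_sum]
  apply Finset.sum_le_sum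
  intro T hT
  have hTcard : T.card = r := (Finset.mem_powersetCard.1 hT).2
  set fib := I.filter (fun b => Finset.image b Finset.univ = T) with hfib
  have hterm : ∀ b ∈ fib, ∏ i, p (b i) = ∏ j ∈ T, p j := by
    intro b hb
    have h1 := Finset.mem_filter.1 hb
    have hbinj : Function.Injective b := (Finset.mem_filter.1 h1.1).2
    rw [← h1.2, Finset.prod_image (fun x _ y _ h => hbinj h)]
  rw [Finset.sum_congr rfl hterm, Finset.sum_const, nsmul_eq_mul]
  have hTnn : (0:ℝ) ≤ ∏ j ∈ T, p j := Finset.prod_nonneg fun j _ => hp0 j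
  apply mul_le_mul_of_nonneg_right _ hTnn
  -- card fib ≤ r!
  rcases fib.eq_empty_or_nonempty with he | ⟨b₀, hb₀⟩
  · rw [he]; simp
  have hmem : ∀ b ∈ fib, ∀ i : Fin r, b i ∈ T := by
    intro b hb i
    rw [← (Finset.mem_filter.1 hb).2]
    exact Finset.mem_image_of_mem b (Finset.mem_univ i)
  have hinj : ∀ b ∈ fib, Function.Injective b := fun b hb =>
    (Finset.mem_filter.1 (Finset.mem_filter.1 hb).1).2
  let embOf : ∀ b ∈ fib, (Fin r ↪ {y // y ∈ T}) := fun b hb =>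
    ⟨fun i => ⟨b i, hmem b hb i⟩, fun i j hij =>
      hinj b hb (congrArg Subtype.val hij)⟩
  let F : (Fin r → Fin n) → (Fin r ↪ {y // y ∈ T}) := fun b =>
    if h : b ∈ fib then embOf b h else embOf b₀ hb₀
  have hF : Set.InjOn F fib := by
    intro b hb c hc hFeq
    have e1 : F b = embOf b hb := dif_pos hb
    have e2 : F c = embOf c hc := dif_pos hc
    rw [e1, e2] at hFeq
    funext i
    have h2 := congrArg (fun (e : Fin r ↪ {y // y ∈ T}) => ((e : Fin r → {y // y ∈ T}) i : Fin n)) hFeq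
    exact h2
  have hcard : fib.card ≤ r.factorial := by
    calc fib.card ≤ (Finset.univ : Finset (Fin r ↪ {y // y ∈ T})).card :=
          Finset.card_le_card_of_injOn F (fun b _ => Finset.mem_univ _) hF
      _ = r.factorial := by
          rw [Finset.card_univ, Fintype.card_embedding_eq, Fintype.card_coe,
            Fintype.card_fin, hTcard, Nat.descFactorial_self]
  exact_mod_cast hcard

end Helpers

section MasterAll
open Finset

variable {n : ℕ} (p : Fin n → ℝ)


lemma W_nonneg (hp0 : ∀ i, 0 ≤ p i) (f : Fin n → Fin n) : 0 ≤ ∏ i, p (f i) :=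
  Finset.prod_nonneg fun i _ => hp0 (f i)

lemma partA (hp0 : ∀ i, 0 ≤ p i) (hp1 : ∑ i, p i = 1) (K : ℕ) (hK : 1 ≤ K) :
    ∑ f ∈ Finset.univ.filter (fun f : Fin n → Fin n => K ≤ (cyclicPts f).card),
      ∏ i, p (f i)
    ≤ ∑ k ∈ Finset.Icc K n, (k.factorial : ℝ) * Ek p k := by
  classical
  have step1 : ∑ f ∈ Finset.univ.filter (fun f : Fin n → Fin n => K ≤ (cyclicPts f).card),
      ∏ i, p (f i)
      ≤ ∑ S ∈ (Finset.univ : Finset (Fin n)).powerset.filter (fun S => K ≤ S.card),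
          ∑ f ∈ Finset.univ.filter (fun f : Fin n → Fin n => S.image f = S), ∏ i, p (f i) := by
    apply union_bound _ _ _ _ (W_nonneg p hp0)
    intro f hf
    refine ⟨cyclicPts f, ?_, ?_⟩
    · rw [Finset.mem_filter, Finset.mem_powerset]
      exact ⟨Finset.subset_univ _, (Finset.mem_filter.1 hf).2⟩
    · rw [Finset.mem_filter]
      exact ⟨Finset.mem_univ _, cyclic_image f⟩
  have step2 : ∀ S : Finset (Fin n),
      ∑ f ∈ Finset.univ.filter (fun f : Fin n → Fin n => S.image f = S), ∏ i, p (f i)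
      ≤ (S.card.factorial : ℝ) * ∏ j ∈ S, p j := by
    intro S
    have hb : ∑ f ∈ Finset.univ.filter (fun f : Fin n → Fin n => S.image f = S), ∏ i, p (f i)
        ≤ ∑ σ ∈ (Finset.univ : Finset (Fin n → Fin n)).filter
            (fun σ => S.image σ = S ∧ ∀ j ∉ S, σ j = j),
            ∑ f ∈ Finset.univ.filter (fun f : Fin n → Fin n => ∀ i ∈ S, f i = σ i),
              ∏ i, p (f i) := by
      apply union_bound _ _ _ _ (W_nonneg p hp0)
      intro f hf
      have hf2 := (Finset.mem_filter.1 hf).2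
      refine ⟨fun j => if j ∈ S then f j else j, ?_, ?_⟩
      · rw [Finset.mem_filter]
        refine ⟨Finset.mem_univ _, ?_, fun j hj => if_neg hj⟩
        have himg : Finset.image (fun j => if j ∈ S then f j else j) S = Finset.image f S := by
          apply Finset.image_congr
          intro x hx
          simp only [Finset.mem_coe] at hx
          simp only [if_pos hx]
        rw [himg, hf2]
      · rw [Finset.mem_filter]
        exact ⟨Finset.mem_univ _, fun i hi => (if_pos hi).symm⟩
    have hc : ∀ σ ∈ (Finset.univ : Finset (Fin n → Fin n)).filter
        (fun σ => S.image σ = S ∧ ∀ j ∉ S, σ j = j),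
        ∑ f ∈ Finset.univ.filter (fun f : Fin n → Fin n => ∀ i ∈ S, f i = σ i), ∏ i, p (f i)
          = ∏ j ∈ S, p j := by
      intro σ hσ
      have h := (Finset.mem_filter.1 hσ).2
      rw [cyl_sum p hp1]
      have hinj : Set.InjOn σ S := by
        apply Finset.injOn_of_card_image_eq
        rw [h.1]
      rw [← Finset.prod_image (fun x hx y hy hxy => hinj hx hy hxy), h.1]
    calc ∑ f ∈ Finset.univ.filter (fun f : Fin n → Fin n => S.image f = S), ∏ i, p (f i)
        ≤ ∑ σ ∈ (Finset.univ : Finset (Fin n → Fin n)).filter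
            (fun σ => S.image σ = S ∧ ∀ j ∉ S, σ j = j), ∏ j ∈ S, p j := by
          rw [← Finset.sum_congr rfl hc]
          exact hb
      _ = (((Finset.univ : Finset (Fin n → Fin n)).filter
            (fun σ => S.image σ = S ∧ ∀ j ∉ S, σ j = j)).card : ℝ) * ∏ j ∈ S, p j := by
          rw [Finset.sum_const, nsmul_eq_mul]
      _ ≤ (S.card.factorial : ℝ) * ∏ j ∈ S, p j := by
          apply mul_le_mul_of_nonneg_right _ (Finset.prod_nonneg fun j _ => hp0 j)
          exact_mod_cast card_perm_like S
  have step3 : ∑ S ∈ (Finset.univ : Finset (Fin n)).powerset.filter (fun S => K ≤ S.card),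
      (S.card.factorial : ℝ) * ∏ j ∈ S, p j
      ≤ ∑ k ∈ Finset.Icc K n, (k.factorial : ℝ) * Ek p k := by
    have hmap : ∀ S ∈ (Finset.univ : Finset (Fin n)).powerset.filter (fun S => K ≤ S.card),
        S.card ∈ Finset.Icc K n := by
      intro S hS
      rw [Finset.mem_Icc]
      refine ⟨(Finset.mem_filter.1 hS).2, ?_⟩
      calc S.card ≤ (Finset.univ : Finset (Fin n)).card := Finset.card_le_univ S
        _ = n := by rw [Finset.card_univ, Fintype.card_fin]
    rw [← Finset.sum_fiberwise_of_maps_to hmap (fun S => (S.card.factorial : ℝ) * ∏ j ∈ S, p j)]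
    apply Finset.sum_le_sum
    intro k hk
    have heq : ∀ S ∈ ((Finset.univ : Finset (Fin n)).powerset.filter
        (fun S => K ≤ S.card)).filter (fun S => S.card = k),
        (S.card.factorial : ℝ) * ∏ j ∈ S, p j = (k.factorial : ℝ) * ∏ j ∈ S, p j := by
      intro S hS
      rw [(Finset.mem_filter.1 hS).2]
    rw [Finset.sum_congr rfl heq, ← Finset.mul_sum]
    apply mul_le_mul_of_nonneg_left _ (by positivity)
    apply Finset.sum_le_sum_of_subset_of_nonneg
    · intro S hS
      rw [Finset.mem_powersetCard]
      exact ⟨Finset.subset_univ _, (Finset.mem_filter.1 hS).2⟩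
    · intro S _ _
      exact Finset.prod_nonneg fun j _ => hp0 j
  exact step1.trans ((Finset.sum_le_sum fun S _ => step2 S).trans step3)

lemma partB (hp0 : ∀ i, 0 ≤ p i) (hp1 : ∑ i, p i = 1) (K' : ℕ) :
    ∑ f ∈ Finset.univ.filter (fun f : Fin n → Fin n => K' + 1 ≤ height f),
      ∏ i, p (f i)
    ≤ (n : ℝ) * ((K'.factorial : ℝ) * Ek p K') := by
  classical
  have step1 : ∑ f ∈ Finset.univ.filter (fun f : Fin n → Fin n => K' + 1 ≤ height f),
      ∏ i, p (f i)
      ≤ ∑ a ∈ (Finset.univ : Finset (Fin (K'+1) → Fin n)).filter Function.Injective,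
          ∑ f ∈ Finset.univ.filter
            (fun f : Fin n → Fin n => ∀ i : Fin K', f (a i.castSucc) = a i.succ),
            ∏ i, p (f i) := by
    apply union_bound _ _ _ _ (W_nonneg p hp0)
    intro f hf
    obtain ⟨x, hx⟩ := exists_high_point f (K'+1) (Nat.succ_pos _) (Finset.mem_filter.1 hf).2
    refine ⟨fun i : Fin (K'+1) => f^[(i : ℕ)] x, ?_, ?_⟩
    · rw [Finset.mem_filter]
      refine ⟨Finset.mem_univ _, fun i j hij => ?_⟩
      exact Fin.ext (iterate_inj_of_le_heightOf f x (K'+1) hx i i.isLt j j.isLt hij)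
    · rw [Finset.mem_filter]
      refine ⟨Finset.mem_univ _, fun i => ?_⟩
      show f (f^[((i.castSucc : Fin (K'+1)) : ℕ)] x) = f^[((i.succ : Fin (K'+1)) : ℕ)] x
      rw [Fin.coe_castSucc, Fin.val_succ, Function.iterate_succ_apply']
  have step2 : ∀ a ∈ (Finset.univ : Finset (Fin (K'+1) → Fin n)).filter Function.Injective,
      ∑ f ∈ Finset.univ.filter
        (fun f : Fin n → Fin n => ∀ i : Fin K', f (a i.castSucc) = a i.succ), ∏ i, p (f i)
      = ∏ i : Fin K', p (a i.succ) := by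
    intro a ha
    have hainj : Function.Injective a := (Finset.mem_filter.1 ha).2
    exact cyl_sum' p hp1 (fun i => a i.castSucc) (fun i => a i.succ)
      (fun i j hij => Fin.castSucc_injective _ (hainj hij))
  rw [Finset.sum_congr rfl step2] at step1
  -- now reindex by (head, tail)
  set φ : (Fin (K'+1) → Fin n) → (Fin n × (Fin K' → Fin n)) :=
    fun a => (a 0, fun i => a i.succ) with hφ
  have hφinj : Function.Injective φ := by
    intro a a' h
    have h1 := congrArg Prod.fst h
    have h2 := congrArg Prod.snd h
    funext j
    induction j using Fin.cases with
    | zero => exact h1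
    | succ i => exact congrFun h2 i
  have step3 : ∑ a ∈ (Finset.univ : Finset (Fin (K'+1) → Fin n)).filter Function.Injective,
      ∏ i : Fin K', p (a i.succ)
      ≤ ∑ y ∈ (Finset.univ : Finset (Fin n)) ×ˢ
          ((Finset.univ : Finset (Fin K' → Fin n)).filter Function.Injective),
          ∏ i : Fin K', p (y.2 i) := by
    rw [← Finset.sum_image (f := fun y : Fin n × (Fin K' → Fin n) => ∏ i : Fin K', p (y.2 i))
      (g := φ) (fun a _ a' _ h => hφinj h)]
    apply Finset.sum_le_sum_of_subset_of_nonneg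
    · intro y hy
      rcases Finset.mem_image.1 hy with ⟨a, ha, rfl⟩
      have hainj : Function.Injective a := (Finset.mem_filter.1 ha).2
      rw [Finset.mem_product]
      constructor
      · exact Finset.mem_univ _
      · rw [Finset.mem_filter]
        exact ⟨Finset.mem_univ _, fun i j hij => Fin.succ_injective _ (hainj hij)⟩
    · intro y _ _
      exact Finset.prod_nonneg fun i _ => hp0 _
  have step4 : ∑ y ∈ (Finset.univ : Finset (Fin n)) ×ˢ
      ((Finset.univ : Finset (Fin K' → Fin n)).filter Function.Injective),
      ∏ i : Fin K', p (y.2 i)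
      = (n : ℝ) * ∑ b ∈ (Finset.univ : Finset (Fin K' → Fin n)).filter Function.Injective,
          ∏ i : Fin K', p (b i) := by
    rw [Finset.sum_product]
    trans ∑ _x : Fin n, ∑ b ∈ (Finset.univ : Finset (Fin K' → Fin n)).filter Function.Injective,
        ∏ i : Fin K', p (b i)
    · rfl
    · rw [Finset.sum_const, Finset.card_univ, Fintype.card_fin, nsmul_eq_mul]
  have step5 := tuple_sum_le (r := K') p hp0
  calc ∑ f ∈ Finset.univ.filter (fun f : Fin n → Fin n => K' + 1 ≤ height f), ∏ i, p (f i)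
      ≤ ∑ a ∈ (Finset.univ : Finset (Fin (K'+1) → Fin n)).filter Function.Injective,
          ∏ i : Fin K', p (a i.succ) := step1
    _ ≤ ∑ y ∈ (Finset.univ : Finset (Fin n)) ×ˢ
          ((Finset.univ : Finset (Fin K' → Fin n)).filter Function.Injective),
          ∏ i : Fin K', p (y.2 i) := step3
    _ = (n : ℝ) * ∑ b ∈ (Finset.univ : Finset (Fin K' → Fin n)).filter Function.Injective,
          ∏ i : Fin K', p (b i) := step4
    _ ≤ (n : ℝ) * ((K'.factorial : ℝ) * Ek p K') := by
        apply mul_le_mul_of_nonneg_left step5 (Nat.cast_nonneg n)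


open Finset in
lemma sum_union_le'' {β : Type*} [DecidableEq β] (u v : Finset β) (g : β → ℝ)
    (hg : ∀ b, 0 ≤ g b) : ∑ b ∈ u ∪ v, g b ≤ ∑ b ∈ u, g b + ∑ b ∈ v, g b := by
  rw [← Finset.union_sdiff_self_eq_union, Finset.sum_union Finset.disjoint_sdiff]
  have h2 : ∑ b ∈ v \ u, g b ≤ ∑ b ∈ v, g b :=
    Finset.sum_le_sum_of_subset_of_nonneg (Finset.sdiff_subset) (fun b _ _ => hg b)
  linarith

set_option maxHeartbeats 2000000 in
/-- For any `ε > 0`, for `n` large enough and for every probability mass function `p`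
on `[n]`, the probability that a random `p`-mapping of size `n` has more than
`n^(1/2+ε)` cyclic points or height greater than `n^(1/2+ε)` is at most `exp(-n^ε)`. -/
theorem p_mapping_cyclic_and_height_bound (ε : ℝ) (hε : 0 < ε) :
    ∃ N : ℕ, ∀ n ≥ N, ∀ p : Fin n → ℝ, (∀ i, 0 ≤ p i) → (∑ i, p i = 1) →
      ∑ f ∈ (Finset.univ : Finset (Fin n → Fin n)).filter
          (fun f => ((cyclicPts f).card : ℝ) > (n : ℝ) ^ ((1 : ℝ)/2 + ε) ∨
            ((height f : ℝ) > (n : ℝ) ^ ((1 : ℝ)/2 + ε))),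
        ∏ i, p (f i)
      ≤ Real.exp (-(n : ℝ) ^ ε) := by
  by_cases hhalf : ε < 1/2
  case neg =>
    -- large ε : the event is empty
    refine ⟨1, fun n hn p hp0 hp1 => ?_⟩
    have hn1 : (1:ℝ) ≤ (n:ℝ) := by exact_mod_cast hn
    have hpow : (n:ℝ) ≤ (n:ℝ) ^ ((1:ℝ)/2 + ε) := by
      calc (n:ℝ) = (n:ℝ) ^ (1:ℝ) := (Real.rpow_one _).symm
        _ ≤ (n:ℝ) ^ ((1:ℝ)/2 + ε) := Real.rpow_le_rpow_of_exponent_le hn1 (by linarith [not_lt.1 hhalf])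
    have hempty : (Finset.univ : Finset (Fin n → Fin n)).filter
          (fun f => ((cyclicPts f).card : ℝ) > (n : ℝ) ^ ((1 : ℝ)/2 + ε) ∨
            ((height f : ℝ) > (n : ℝ) ^ ((1 : ℝ)/2 + ε))) = ∅ := by
      rw [Finset.filter_eq_empty_iff]
      intro f _
      push_neg
      constructor
      · have h1 : (cyclicPts f).card ≤ n := by
          calc (cyclicPts f).card ≤ (Finset.univ : Finset (Fin n)).card := Finset.card_le_univ _
            _ = n := by rw [Finset.card_univ, Fintype.card_fin]
        calc ((cyclicPts f).card : ℝ) ≤ (n:ℝ) := by exact_mod_cast h1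
          _ ≤ _ := hpow
      · have h1 : height f ≤ n := by
          apply Finset.sup_le
          intro x _
          exact (heightOf_lt f x).le
        calc ((height f : ℝ)) ≤ (n:ℝ) := by exact_mod_cast h1
          _ ≤ _ := hpow
    rw [hempty, Finset.sum_empty]
    exact (Real.exp_pos _).le
  case pos =>
    set δ : ℝ := 1/2 - ε with hδ
    have hδpos : 0 < δ := by simp [hδ]; linarith
    set C : ℝ := 29 + 18/ε with hC
    have hC1 : 1 ≤ C := by
      have : 0 < 18/ε := by positivity
      simp [hC]; linarith
    refine ⟨max 2 (max (⌈C ^ (1/ε)⌉₊ + 1) (⌈(2:ℝ) ^ (1/δ)⌉₊ + 1)), fun n hn p hp0 hp1 => ?_⟩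
    have hn2 : 2 ≤ n := le_trans (le_max_left _ _) hn
    have hn1 : 1 ≤ n := by omega
    have hnr : (0:ℝ) < n := by
      have : (0:ℕ) < n := by omega
      exact_mod_cast this
    have hnr1 : (1:ℝ) ≤ (n:ℝ) := by exact_mod_cast hn1
    have hnC : C ≤ (n:ℝ) ^ ε := by
      have h2 : (⌈C ^ (1/ε)⌉₊ : ℝ) + 1 ≤ (n:ℝ) := by
        have h3 : ⌈C ^ (1/ε)⌉₊ + 1 ≤ n :=
          le_trans (le_trans (le_max_left _ _) (le_max_right 2 _)) hn
        exact_mod_cast h3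
      have h1 : (C ^ (1/ε) : ℝ) ≤ (n:ℝ) := by linarith [Nat.le_ceil (C ^ (1/ε) : ℝ)]
      calc C = (C ^ (1/ε)) ^ ε := by
            rw [← Real.rpow_mul (by linarith : (0:ℝ) ≤ C), one_div,
              inv_mul_cancel₀ (ne_of_gt hε), Real.rpow_one]
        _ ≤ (n:ℝ) ^ ε := Real.rpow_le_rpow (Real.rpow_nonneg (by linarith) _) h1 hε.le
    have hnδ : (2:ℝ) ≤ (n:ℝ) ^ δ := by
      have h2 : (⌈(2:ℝ) ^ (1/δ)⌉₊ : ℝ) + 1 ≤ (n:ℝ) := by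
        have h3 : ⌈(2:ℝ) ^ (1/δ)⌉₊ + 1 ≤ n :=
          le_trans (le_trans (le_max_right _ _) (le_max_right 2 _)) hn
        exact_mod_cast h3
      have h1 : ((2:ℝ) ^ (1/δ) : ℝ) ≤ (n:ℝ) := by linarith [Nat.le_ceil ((2:ℝ) ^ (1/δ) : ℝ)]
      calc (2:ℝ) = ((2:ℝ) ^ (1/δ)) ^ δ := by
            rw [← Real.rpow_mul (by norm_num : (0:ℝ) ≤ 2), one_div,
              inv_mul_cancel₀ (ne_of_gt hδpos), Real.rpow_one]
        _ ≤ (n:ℝ) ^ δ := Real.rpow_le_rpow (Real.rpow_nonneg (by norm_num) _) h1 hδpos.le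
    set m : ℝ := (n:ℝ) ^ ((1:ℝ)/2 + ε) with hm
    have hm1 : (1:ℝ) ≤ m := by
      rw [hm]
      calc (1:ℝ) = (1:ℝ) ^ ((1:ℝ)/2+ε) := (Real.one_rpow _).symm
        _ ≤ _ := Real.rpow_le_rpow zero_le_one hnr1 (by linarith)
    set K' : ℕ := ⌊m⌋₊ with hK'
    have hK'1 : 1 ≤ K' := Nat.le_floor (by exact_mod_cast hm1)
    have hK'm : (K' : ℝ) ≤ m := Nat.floor_le (by linarith)
    have hmhalf : m ≤ (n:ℝ)/2 := by
      have h1 : m * (n:ℝ)^δ = (n:ℝ) := by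
        rw [hm, ← Real.rpow_add hnr]
        have : (1:ℝ)/2 + ε + δ = 1 := by rw [hδ]; ring
        rw [this, Real.rpow_one]
      nlinarith [Real.rpow_pos_of_pos hnr δ, hm1]
    have hKn : K' + 1 ≤ n := by
      have h1 : (K':ℝ) < (n:ℝ) := lt_of_le_of_lt (hK'm.trans hmhalf) (by linarith)
      have h2 : K' < n := by exact_mod_cast h1
      omega
    -- event splitting
    have hsplit : (Finset.univ : Finset (Fin n → Fin n)).filter
          (fun f => ((cyclicPts f).card : ℝ) > (n : ℝ) ^ ((1 : ℝ)/2 + ε) ∨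
            ((height f : ℝ) > (n : ℝ) ^ ((1 : ℝ)/2 + ε)))
        ⊆ (Finset.univ.filter (fun f : Fin n → Fin n => K' + 1 ≤ (cyclicPts f).card)) ∪
          (Finset.univ.filter (fun f : Fin n → Fin n => K' + 1 ≤ height f)) := by
      intro f hf
      have hf2 := (Finset.mem_filter.1 hf).2
      rcases hf2 with h | h
      · apply Finset.mem_union_left
        rw [Finset.mem_filter]
        refine ⟨Finset.mem_univ _, ?_⟩
        have : K' < (cyclicPts f).card := (Nat.floor_lt (by linarith)).2 h
        omega
      · apply Finset.mem_union_right
        rw [Finset.mem_filter]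
        refine ⟨Finset.mem_univ _, ?_⟩
        have : K' < height f := (Nat.floor_lt (by linarith)).2 h
        omega
    have hWnn : ∀ f : Fin n → Fin n, 0 ≤ ∏ i, p (f i) :=
      fun f => Finset.prod_nonneg fun i _ => hp0 (f i)
    set D : ℝ := Real.exp 1 * n * Real.exp (-((K':ℝ)^2/(9*n))) with hD
    have hD0 : 0 ≤ D := by
      rw [hD]; positivity
    -- bound part A
    have hA : ∑ f ∈ Finset.univ.filter (fun f : Fin n → Fin n => K' + 1 ≤ (cyclicPts f).card),
        ∏ i, p (f i) ≤ (n:ℝ) * D := by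
      refine (partA p hp0 hp1 (K'+1) (by omega)).trans ?_
      have hterm : ∀ k ∈ Finset.Icc (K'+1) n, (k.factorial : ℝ) * Ek p k ≤ D := by
        intro k hk
        rw [Finset.mem_Icc] at hk
        refine (esymm_bound hn1 p hp0 hp1 k (by omega) hk.2).trans ?_
        rw [hD]
        apply mul_le_mul_of_nonneg_left _ (by positivity)
        apply Real.exp_le_exp.2
        have hkK : (K':ℝ) ≤ (k:ℝ) := by exact_mod_cast (by omega : K' ≤ k)
        have hK'0 : (0:ℝ) ≤ (K':ℝ) := Nat.cast_nonneg _
        have : (K':ℝ)^2 ≤ (k:ℝ)^2 := by nlinarith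
        have h9 : (0:ℝ) < 9*(n:ℝ) := by linarith
        rw [neg_le_neg_iff]
        gcongr
      refine (Finset.sum_le_card_nsmul _ _ _ hterm).trans ?_
      rw [nsmul_eq_mul]
      apply mul_le_mul_of_nonneg_right _ hD0
      have : (Finset.Icc (K'+1) n).card ≤ n := by
        rw [Nat.card_Icc]
        omega
      exact_mod_cast this
    -- bound part B
    have hB : ∑ f ∈ Finset.univ.filter (fun f : Fin n → Fin n => K' + 1 ≤ height f),
        ∏ i, p (f i) ≤ (n:ℝ) * D := by
      refine (partB p hp0 hp1 K').trans ?_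
      apply mul_le_mul_of_nonneg_left _ (Nat.cast_nonneg n)
      exact esymm_bound hn1 p hp0 hp1 K' hK'1 (by omega)
    -- final numerics
    set y : ℝ := (n:ℝ)^ε with hy
    have hy1 : (1:ℝ) ≤ y := by
      rw [hy]
      calc (1:ℝ) = (1:ℝ) ^ ε := (Real.one_rpow _).symm
        _ ≤ _ := Real.rpow_le_rpow zero_le_one hnr1 hε.le
    have hyC : C ≤ y := hnC
    have hlogn : Real.log n ≤ y / ε := by
      have h1 : Real.log ((n:ℝ)^ε) = ε * Real.log n := Real.log_rpow hnr ε
      have h2 : Real.log ((n:ℝ)^ε) ≤ y - 1 := by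
        rw [← hy]; exact Real.log_le_sub_one_of_pos (by positivity)
      have h3 : ε * Real.log n ≤ y := by rw [← h1]; linarith
      rw [le_div_iff₀ hε]
      linarith [mul_comm ε (Real.log n)]
    have hm2 : m^2 = (n:ℝ) * y^2 := by
      have e1 : m^2 = (n:ℝ) ^ (((1:ℝ)/2 + ε) * (2:ℕ)) := by
        rw [hm, Real.rpow_mul_natCast hnr.le]
      have e2 : ((1:ℝ)/2 + ε) * ((2:ℕ):ℝ) = 1 + ε * (2:ℕ) := by push_cast; ring
      rw [e1, e2, Real.rpow_add hnr, Real.rpow_one, Real.rpow_mul_natCast hnr.le, ← hy]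
    have hfloor : m - 1 ≤ (K':ℝ) := by
      have := Nat.lt_floor_add_one m
      rw [← hK'] at this
      linarith
    have hmn : m ≤ (n:ℝ) := by linarith
    have hK'sq : (y^2 - 2)/9 ≤ (K':ℝ)^2/(9*(n:ℝ)) := by
      have h0 : 0 ≤ m - 1 := by linarith
      have hsq : (m-1)^2 ≤ (K':ℝ)^2 := pow_le_pow_left₀ h0 hfloor 2
      have hexp2 : (m-1)^2 = m^2 - 2*m + 1 := by ring
      have hndef : (n:ℝ)*(y^2-2) = (n:ℝ)*y^2 - 2*(n:ℝ) := by ring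
      have h1 : (n:ℝ)*(y^2 - 2) ≤ (K':ℝ)^2 := by linarith
      rw [div_le_div_iff₀ (by norm_num) (by positivity)]
      have h2 : (y^2-2)*(9*(n:ℝ)) = 9*((n:ℝ)*(y^2-2)) := by ring
      linarith
    have hexp_pos : (0:ℝ) < 2*((n:ℝ)*(Real.exp 1 * n)) := by positivity
    have hlogkey : Real.log (2*((n:ℝ)*(Real.exp 1 * n))) ≤ (y^2-2)/9 - y := by
      have hl2 : Real.log 2 ≤ 1 := by
        have := Real.log_le_sub_one_of_pos (by norm_num : (0:ℝ) < 2)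
        linarith
      have hle : Real.log (2*((n:ℝ)*(Real.exp 1 * n)))
          = Real.log 2 + Real.log n + 1 + Real.log n := by
        rw [Real.log_mul (by norm_num) (by positivity),
          Real.log_mul (by positivity) (by positivity),
          Real.log_mul (Real.exp_ne_zero 1) (by positivity), Real.log_exp]
        ring
      rw [hle]
      set B : ℝ := 18/ε with hB
      have hBpos : 0 < B := by positivity
      have hyB : Real.log n ≤ y * B / 18 := by
        rw [hB]
        calc Real.log n ≤ y / ε := hlogn
          _ = y * (18/ε) / 18 := by field_simp
      have hCy : 29 + B ≤ y := hC ▸ hyC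
      have h4 := mul_le_mul_of_nonneg_right hCy (by linarith : (0:ℝ) ≤ y)
      have h5 : (29+B)*y = 29*y + B*y := by ring
      have h6 : y^2 = y*y := by ring
      linarith [h4, h5, h6, hyB, hl2, hy1]
    have hkey : 2*((n:ℝ)*(Real.exp 1 * n)) ≤ Real.exp ((K':ℝ)^2/(9*(n:ℝ)) - y) := by
      have h1 : Real.log (2*((n:ℝ)*(Real.exp 1 * n))) ≤ (K':ℝ)^2/(9*(n:ℝ)) - y := by
        linarith [hK'sq, hlogkey]
      exact (Real.log_le_iff_le_exp hexp_pos).1 h1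
    -- combine
    calc ∑ f ∈ (Finset.univ : Finset (Fin n → Fin n)).filter
          (fun f => ((cyclicPts f).card : ℝ) > (n : ℝ) ^ ((1 : ℝ)/2 + ε) ∨
            ((height f : ℝ) > (n : ℝ) ^ ((1 : ℝ)/2 + ε))), ∏ i, p (f i)
        ≤ ∑ f ∈ (Finset.univ.filter (fun f : Fin n → Fin n => K' + 1 ≤ (cyclicPts f).card)) ∪
            (Finset.univ.filter (fun f : Fin n → Fin n => K' + 1 ≤ height f)), ∏ i, p (f i) :=
          Finset.sum_le_sum_of_subset_of_nonneg hsplit (fun f _ _ => hWnn f)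
      _ ≤ (∑ f ∈ Finset.univ.filter (fun f : Fin n → Fin n => K' + 1 ≤ (cyclicPts f).card),
            ∏ i, p (f i)) +
          ∑ f ∈ Finset.univ.filter (fun f : Fin n → Fin n => K' + 1 ≤ height f),
            ∏ i, p (f i) := sum_union_le'' _ _ _ hWnn
      _ ≤ (n:ℝ) * D + (n:ℝ) * D := add_le_add hA hB
      _ = (2*((n:ℝ)*(Real.exp 1 * n))) * Real.exp (-((K':ℝ)^2/(9*n))) := by
          rw [hD]; ring
      _ ≤ Real.exp ((K':ℝ)^2/(9*(n:ℝ)) - y) * Real.exp (-((K':ℝ)^2/(9*n))) :=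
          mul_le_mul_of_nonneg_right hkey (Real.exp_pos _).le
      _ = Real.exp (-(n:ℝ)^ε) := by
          rw [← Real.exp_add, ← hy]
          ring_nf

end MasterAll
end

section
/- Fix a real number ε > 0. For all n large enough, the probability that a uniform random mapping on [n] has at least n^{1/2+ε} cyclic points is at most (1/2)·exp(−n^ε). -/
open Classical

section CycAuxSection
open Finset

namespace CycAux

variable {n : ℕ}

lemma mem_cyclicPts {f : Fin n → Fin n} {x : Fin n} :
    x ∈ cyclicPts f ↔ IsCyclicPt f x := by
  simp [cyclicPts]

lemma apply_mem {f : Fin n → Fin n} {x : Fin n} (hx : x ∈ cyclicPts f) :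
    f x ∈ cyclicPts f := by
  rw [mem_cyclicPts] at *
  obtain ⟨i, hi, hfi⟩ := hx
  exact ⟨i, hi, by rw [← Function.iterate_succ_apply, Function.iterate_succ_apply', hfi]⟩

lemma injOn_cyclic (f : Fin n → Fin n) : Set.InjOn f (cyclicPts f) := by
  intro x hx y hy hxy
  rw [Finset.mem_coe, mem_cyclicPts] at hx hy
  obtain ⟨i, hi, hfi⟩ := hx
  obtain ⟨j, hj, hfj⟩ := hy
  have hx' : f^[i*j] x = x := by
    rw [Function.iterate_mul]
    exact Function.iterate_fixed hfi j
  have hy' : f^[i*j] y = y := by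
    rw [mul_comm, Function.iterate_mul]
    exact Function.iterate_fixed hfj i
  have hij : 1 ≤ i * j := Nat.one_le_iff_ne_zero.2 (by positivity)
  calc x = f^[i*j] x := hx'.symm
    _ = f^[i*j - 1] (f x) := by rw [← Function.iterate_succ_apply]; congr 1; omega
    _ = f^[i*j - 1] (f y) := by rw [hxy]
    _ = f^[i*j] y := by rw [← Function.iterate_succ_apply]; congr 1; omega
    _ = y := hy'

lemma bijOn_cyclic (f : Fin n → Fin n) : Set.BijOn f (cyclicPts f) (cyclicPts f) := by
  have hm : Set.MapsTo f (cyclicPts f) (cyclicPts f) := fun x hx => apply_mem hx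
  exact ((Set.Finite.injOn_iff_bijOn_of_mapsTo (Finset.finite_toSet _) hm).1 (injOn_cyclic f))

lemma card_cyclic_le (f : Fin n → Fin n) : (cyclicPts f).card ≤ n := by
  simpa using Finset.card_le_univ (cyclicPts f)





def P (C : Finset (Fin n)) (g : Fin n → Fin n) : Prop :=
  Set.BijOn g ↑C ↑C ∧ ∀ x ∉ C, g x = x

noncomputable def SC (C : Finset (Fin n)) : Finset (Fin n → Fin n) :=
  univ.filter (P C)

def OrdC (C : Finset (Fin n)) := {e : Fin C.card ↪ Fin n // ∀ i, e i ∈ C}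

noncomputable instance (C : Finset (Fin n)) : Fintype (OrdC C) := by
  unfold OrdC; infer_instance

noncomputable def embSC (C : Finset (Fin n)) : ↥(SC C) → (↥C ↪ ↥C) := fun g =>
    ⟨fun x => ⟨g.1 x, by
        have hg := (Finset.mem_filter.1 g.2).2
        exact Finset.mem_coe.1 (hg.1.mapsTo (Finset.mem_coe.2 x.2))⟩,
      by
        intro a b hab
        have hg := (Finset.mem_filter.1 g.2).2
        exact Subtype.ext (hg.1.injOn (Finset.mem_coe.2 a.2) (Finset.mem_coe.2 b.2)
          (congrArg Subtype.val hab))⟩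

lemma card_SC_le (C : Finset (Fin n)) : (SC C).card ≤ Nat.factorial C.card := by
  classical
  have h1 : (SC C).card = Fintype.card ↥(SC C) := (Fintype.card_coe _).symm
  rw [h1]
  have hinj : Function.Injective (embSC C) := by
    intro g₁ g₂ h
    apply Subtype.ext; funext x
    by_cases hx : x ∈ C
    · have := congrFun (congrArg (fun (e : ↥C ↪ ↥C) => (e : ↥C → ↥C)) h) ⟨x, hx⟩
      exact congrArg Subtype.val this
    · rw [(Finset.mem_filter.1 g₁.2).2.2 x hx, (Finset.mem_filter.1 g₂.2).2.2 x hx]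
  calc Fintype.card ↥(SC C) ≤ Fintype.card (↥C ↪ ↥C) := Fintype.card_le_of_injective (embSC C) hinj
    _ = Nat.factorial C.card := by
        rw [Fintype.card_embedding_eq, Fintype.card_coe, Nat.descFactorial_self]

def embOrd (C : Finset (Fin n)) : (Fin C.card ≃ ↥C) → OrdC C := fun e =>
    ⟨⟨fun i => (e i : Fin n), by
        intro a b hab
        exact e.injective (Subtype.ext hab)⟩, fun i => (e i).2⟩

lemma card_OrdC_ge (C : Finset (Fin n)) : Nat.factorial C.card ≤ Fintype.card (OrdC C) := by
  classical
  have e₀ : Fin C.card ≃ ↥C := (Fintype.equivFinOfCardEq (Fintype.card_coe C)).symm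
  have hinj : Function.Injective (embOrd C) := by
    intro e₁ e₂ h
    apply Equiv.ext; intro i
    apply Subtype.ext
    exact congrFun (congrArg (fun (x : OrdC C) => (x.1 : Fin C.card → Fin n)) h) i
  calc Nat.factorial C.card = Fintype.card (Fin C.card ≃ ↥C) := by
        rw [Fintype.card_equiv e₀, Fintype.card_fin]
    _ ≤ Fintype.card (OrdC C) := Fintype.card_le_of_injective (embOrd C) hinj

noncomputable def encE (C : Finset (Fin n)) : ↥(SC C) ↪ OrdC C :=
  Classical.choice (Function.Embedding.nonempty_of_card_le
    (by rw [Fintype.card_coe]; exact (card_SC_le C).trans (card_OrdC_ge C)))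

lemma encE_congr {C C' : Finset (Fin n)} (h : C = C') (g : Fin n → Fin n)
    (hg : g ∈ SC C) (hg' : g ∈ SC C') (i : ℕ) (hi : i < C.card) (hi' : i < C'.card) :
    (encE C ⟨g, hg⟩).1 ⟨i, hi⟩ = (encE C' ⟨g, hg'⟩).1 ⟨i, hi'⟩ := by
  subst h; rfl


noncomputable def fC (f : Fin n → Fin n) : Fin n → Fin n :=
  fun x => if x ∈ cyclicPts f then f x else x

lemma fC_eq_of_mem {f : Fin n → Fin n} {x : Fin n} (hx : x ∈ cyclicPts f) :
    fC f x = f x := if_pos hx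

lemma fC_mem (f : Fin n → Fin n) : fC f ∈ SC (cyclicPts f) := by
  rw [SC, Finset.mem_filter]
  refine ⟨Finset.mem_univ _, ?_, fun x hx => if_neg hx⟩
  exact (bijOn_cyclic f).congr (fun x hx => (fC_eq_of_mem (Finset.mem_coe.1 hx)).symm)

noncomputable def eOf (f : Fin n → Fin n) : OrdC (cyclicPts f) :=
  encE (cyclicPts f) ⟨fC f, fC_mem f⟩

lemma eOf_image (f : Fin n → Fin n) :
    Finset.image (eOf f).1 Finset.univ = cyclicPts f := by
  apply Finset.eq_of_subset_of_card_le
  · intro x hx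
    obtain ⟨i, -, rfl⟩ := Finset.mem_image.1 hx
    exact (eOf f).2 i
  · rw [Finset.card_image_of_injective _ (eOf f).1.injective]
    simp


lemma compl_card (f : Fin n → Fin n) :
    (cyclicPts f)ᶜ.card = n - (cyclicPts f).card := by
  rw [Finset.card_compl, Fintype.card_fin]

noncomputable def phi (k : ℕ) (hk1 : 0 < k) (hkn : k ≤ n) (f : Fin n → Fin n) :
    (Fin k ↪ Fin n) × Fin n × (Fin (n - k) → Fin n) :=
  if hf : k ≤ (cyclicPts f).card then
    ((Fin.castLEEmb hf).trans (eOf f).1,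
     ⟨(cyclicPts f).card - k, by have := card_cyclic_le f; omega⟩,
     fun j => if hj : (j : ℕ) < (cyclicPts f).card - k
       then (eOf f).1 ⟨k + (j : ℕ), by omega⟩
       else f ↑(((cyclicPts f)ᶜ.orderIsoOfFin (compl_card f))
         ⟨(j : ℕ) - ((cyclicPts f).card - k),
          by have := j.2; have := card_cyclic_le f; omega⟩))
  else ((Fin.castLEEmb hkn), ⟨0, by omega⟩, fun _ => ⟨0, by omega⟩)

lemma orderIsoOfFin_congr {α : Type*} [LinearOrder α] {s t : Finset α} (hst : s = t)
    {a b : ℕ} (hs : s.card = a) (ht : t.card = b) {i j : ℕ} (hij : i = j)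
    (hia : i < a) (hjb : j < b) :
    (s.orderIsoOfFin hs ⟨i, hia⟩ : α) = (t.orderIsoOfFin ht ⟨j, hjb⟩ : α) := by
  subst hst; subst hij
  have hab : a = b := hs.symm.trans ht
  subst hab
  rfl

lemma phi_injOn (k : ℕ) (hk1 : 0 < k) (hkn : k ≤ n) :
    Set.InjOn (phi k hk1 hkn)
      ((Finset.univ.filter (fun f : Fin n → Fin n => k ≤ (cyclicPts f).card)) : Set _) := by
  intro f₁ hf₁' f₂ hf₂' heq
  have hf₁ : k ≤ (cyclicPts f₁).card :=
    (Finset.mem_filter.1 (Finset.mem_coe.1 hf₁')).2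
  have hf₂ : k ≤ (cyclicPts f₂).card :=
    (Finset.mem_filter.1 (Finset.mem_coe.1 hf₂')).2
  have hm₁ : (cyclicPts f₁).card ≤ n := card_cyclic_le f₁
  have hm₂ : (cyclicPts f₂).card ≤ n := card_cyclic_le f₂
  rw [phi, phi, dif_pos hf₁, dif_pos hf₂, Prod.mk.injEq, Prod.mk.injEq] at heq
  obtain ⟨hv, hw, hg⟩ := heq
  -- equal cardinalities
  have hm : (cyclicPts f₁).card = (cyclicPts f₂).card := by
    have hw' : (cyclicPts f₁).card - k = (cyclicPts f₂).card - k := congrArg Fin.val hw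
    omega
  -- entries of the chosen orderings coincide
  have hE : ∀ (i : ℕ) (h₁ : i < (cyclicPts f₁).card) (h₂ : i < (cyclicPts f₂).card),
      (eOf f₁).1 ⟨i, h₁⟩ = (eOf f₂).1 ⟨i, h₂⟩ := by
    intro i h₁ h₂
    by_cases hik : i < k
    · have := congrFun (congrArg (fun (e : Fin k ↪ Fin n) => (e : Fin k → Fin n)) hv) ⟨i, hik⟩
      exact this
    · have hjlt : i - k < n - k := by omega
      have := congrFun hg ⟨i - k, hjlt⟩
      rw [dif_pos (show ((⟨i - k, hjlt⟩ : Fin (n - k)) : ℕ) < (cyclicPts f₁).card - k by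
            show i - k < (cyclicPts f₁).card - k; omega),
          dif_pos (show ((⟨i - k, hjlt⟩ : Fin (n - k)) : ℕ) < (cyclicPts f₂).card - k by
            show i - k < (cyclicPts f₂).card - k; omega)] at this
      have l1 : (eOf f₁).1 ⟨k + ((⟨i - k, hjlt⟩ : Fin (n - k)) : ℕ),
            by show k + (i - k) < (cyclicPts f₁).card; omega⟩
          = (eOf f₁).1 ⟨i, h₁⟩ := by
        congr 1; exact Fin.ext (show k + (i - k) = i by omega)
      have l2 : (eOf f₂).1 ⟨k + ((⟨i - k, hjlt⟩ : Fin (n - k)) : ℕ),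
            by show k + (i - k) < (cyclicPts f₂).card; omega⟩
          = (eOf f₂).1 ⟨i, h₂⟩ := by
        congr 1; exact Fin.ext (show k + (i - k) = i by omega)
      rw [l1, l2] at this
      exact this
  -- the cyclic sets coincide
  have hC : cyclicPts f₁ = cyclicPts f₂ := by
    ext x
    rw [← eOf_image f₁, ← eOf_image f₂]
    simp only [Finset.mem_image, Finset.mem_univ, true_and]
    constructor
    · rintro ⟨i, rfl⟩
      exact ⟨⟨i.1, by omega⟩, (hE i.1 i.2 (by omega)).symm⟩
    · rintro ⟨i, rfl⟩
      exact ⟨⟨i.1, by omega⟩, hE i.1 (by omega) i.2⟩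
  -- the restricted maps coincide
  have hmem₂ : fC f₂ ∈ SC (cyclicPts f₁) := by rw [hC]; exact fC_mem f₂
  have hkey : encE (cyclicPts f₁) ⟨fC f₁, fC_mem f₁⟩
      = encE (cyclicPts f₁) ⟨fC f₂, hmem₂⟩ := by
    apply Subtype.ext
    apply Function.Embedding.ext
    intro i
    calc (encE (cyclicPts f₁) ⟨fC f₁, fC_mem f₁⟩).1 i = (eOf f₁).1 i := rfl
      _ = (eOf f₂).1 ⟨i.1, by omega⟩ := hE i.1 i.2 (by omega)
      _ = (encE (cyclicPts f₁) ⟨fC f₂, hmem₂⟩).1 ⟨i.1, i.2⟩ :=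
          (encE_congr hC (fC f₂) hmem₂ (fC_mem f₂) i.1 i.2 (by omega)).symm
  have hfc : fC f₁ = fC f₂ :=
    Subtype.ext_iff.1 ((encE (cyclicPts f₁)).injective hkey)
  -- conclude
  funext x
  by_cases hx : x ∈ cyclicPts f₁
  · have hx₂ : x ∈ cyclicPts f₂ := hC ▸ hx
    calc f₁ x = fC f₁ x := (fC_eq_of_mem hx).symm
      _ = fC f₂ x := congrFun hfc x
      _ = f₂ x := fC_eq_of_mem hx₂
  · have hx₂ : x ∉ cyclicPts f₂ := hC ▸ hx
    set r := (((cyclicPts f₁)ᶜ).orderIsoOfFin (compl_card f₁)).symm ⟨x, Finset.mem_compl.2 hx⟩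
      with hr
    have hrval : ((((cyclicPts f₁)ᶜ).orderIsoOfFin (compl_card f₁)) r : Fin n) = x := by
      rw [hr, OrderIso.apply_symm_apply]
    have hr2 : (r : ℕ) < n - (cyclicPts f₁).card := r.2
    have hj : ((cyclicPts f₁).card - k) + (r : ℕ) < n - k := by omega
    have := congrFun hg ⟨((cyclicPts f₁).card - k) + (r : ℕ), hj⟩
    rw [dif_neg (show ¬(((⟨((cyclicPts f₁).card - k) + (r : ℕ), hj⟩ : Fin (n - k)) : ℕ)
            < (cyclicPts f₁).card - k) by
          show ¬(((cyclicPts f₁).card - k) + (r : ℕ) < (cyclicPts f₁).card - k); omega),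
        dif_neg (show ¬(((⟨((cyclicPts f₁).card - k) + (r : ℕ), hj⟩ : Fin (n - k)) : ℕ)
            < (cyclicPts f₂).card - k) by
          show ¬(((cyclicPts f₁).card - k) + (r : ℕ) < (cyclicPts f₂).card - k); omega)] at this
    have l1 : f₁ ↑(((cyclicPts f₁)ᶜ.orderIsoOfFin (compl_card f₁))
        ⟨((⟨((cyclicPts f₁).card - k) + (r : ℕ), hj⟩ : Fin (n - k)) : ℕ)
            - ((cyclicPts f₁).card - k),
          by show ((cyclicPts f₁).card - k) + (r : ℕ) - ((cyclicPts f₁).card - k)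
               < n - (cyclicPts f₁).card; omega⟩) = f₁ x := by
      congr 1
      rw [show (⟨((⟨((cyclicPts f₁).card - k) + (r : ℕ), hj⟩ : Fin (n - k)) : ℕ)
            - ((cyclicPts f₁).card - k),
            by show ((cyclicPts f₁).card - k) + (r : ℕ) - ((cyclicPts f₁).card - k)
                 < n - (cyclicPts f₁).card; omega⟩ : Fin (n - (cyclicPts f₁).card))
          = ⟨(r : ℕ), hr2⟩ from Fin.ext (show ((cyclicPts f₁).card - k) + (r : ℕ)
              - ((cyclicPts f₁).card - k) = (r : ℕ) by omega)]
      exact hrval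
    have l2 : f₂ ↑(((cyclicPts f₂)ᶜ.orderIsoOfFin (compl_card f₂))
        ⟨((⟨((cyclicPts f₁).card - k) + (r : ℕ), hj⟩ : Fin (n - k)) : ℕ)
            - ((cyclicPts f₂).card - k),
          by show ((cyclicPts f₁).card - k) + (r : ℕ) - ((cyclicPts f₂).card - k)
               < n - (cyclicPts f₂).card; omega⟩) = f₂ x := by
      congr 1
      rw [orderIsoOfFin_congr (congrArg compl hC).symm (compl_card f₂) (compl_card f₁)
        (show ((⟨((cyclicPts f₁).card - k) + (r : ℕ), hj⟩ : Fin (n - k)) : ℕ)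
            - ((cyclicPts f₂).card - k) = (r : ℕ) by
          show ((cyclicPts f₁).card - k) + (r : ℕ) - ((cyclicPts f₂).card - k) = (r : ℕ); omega)
        (by show ((cyclicPts f₁).card - k) + (r : ℕ) - ((cyclicPts f₂).card - k)
              < n - (cyclicPts f₂).card; omega) hr2]
      exact hrval
    rw [l1, l2] at this
    exact this


lemma count_le (k : ℕ) (hk1 : 0 < k) (hkn : k ≤ n) :
    (Finset.univ.filter (fun f : Fin n → Fin n => k ≤ (cyclicPts f).card)).card
      ≤ n.descFactorial k * (n * n ^ (n - k)) := by
  have h := Finset.card_le_card_of_injOn (phi k hk1 hkn) (fun f _ => Finset.mem_univ _)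
    (phi_injOn k hk1 hkn)
  calc (Finset.univ.filter (fun f : Fin n → Fin n => k ≤ (cyclicPts f).card)).card
      ≤ (Finset.univ : Finset ((Fin k ↪ Fin n) × Fin n × (Fin (n - k) → Fin n))).card := h
    _ = n.descFactorial k * (n * n ^ (n - k)) := by
        rw [Finset.card_univ, Fintype.card_prod, Fintype.card_prod,
          Fintype.card_embedding_eq, Fintype.card_fun]
        simp


lemma descFactorial_le_exp (n k : ℕ) (hk : k ≤ n) (hn : 0 < n) :
    (n.descFactorial k : ℝ)
      ≤ (n : ℝ) ^ k * Real.exp (-((k : ℝ) * ((k : ℝ) - 1)) / (2 * n)) := by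
  have hn' : (0:ℝ) < n := by exact_mod_cast hn
  have hsum : ∑ i ∈ Finset.range k, (i : ℝ) = (k : ℝ) * ((k : ℝ) - 1) / 2 := by
    rcases Nat.eq_zero_or_pos k with hk0 | hk0
    · subst hk0; simp
    · have h2 := congrArg (Nat.cast : ℕ → ℝ) (Finset.sum_range_id_mul_two k)
      push_cast [Nat.cast_sub hk0] at h2
      linarith
  calc (n.descFactorial k : ℝ) = ∏ i ∈ Finset.range k, ((n - i : ℕ) : ℝ) := by
        rw [Nat.descFactorial_eq_prod_range, Nat.cast_prod]
    _ ≤ ∏ i ∈ Finset.range k, ((n : ℝ) * Real.exp (-(i : ℝ) / n)) := by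
        apply Finset.prod_le_prod
        · intro i _; exact Nat.cast_nonneg _
        · intro i hi
          have hi' : i ≤ n := le_trans (Finset.mem_range.1 hi).le hk
          rw [Nat.cast_sub hi']
          have h1 : 1 + (-(i:ℝ)/n) ≤ Real.exp (-(i:ℝ)/n) := by
            have := Real.add_one_le_exp (-(i:ℝ)/n); linarith
          have h2 : (n:ℝ) * (1 + (-(i:ℝ)/n)) = (n:ℝ) - i := by field_simp; ring
          calc (n:ℝ) - (i:ℝ) = (n:ℝ) * (1 + (-(i:ℝ)/n)) := h2.symm
            _ ≤ (n:ℝ) * Real.exp (-(i:ℝ)/n) :=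
                mul_le_mul_of_nonneg_left h1 hn'.le
    _ = (n:ℝ)^k * Real.exp (∑ i ∈ Finset.range k, (-(i:ℝ)/n)) := by
        rw [Finset.prod_mul_distrib, Finset.prod_const, Finset.card_range, Real.exp_sum]
    _ = (n : ℝ) ^ k * Real.exp (-((k : ℝ) * ((k : ℝ) - 1)) / (2 * n)) := by
        congr 1
        rw [show (∑ i ∈ Finset.range k, (-(i:ℝ)/n)) = -(∑ i ∈ Finset.range k, (i:ℝ))/n by
          rw [← Finset.sum_div, ← Finset.sum_neg_distrib]]
        rw [hsum]; ring

end CycAux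

lemma CycAux.arith_main (ε nR A T K : ℝ) (hε : 0 < ε) (hnR : 1 ≤ nR)
    (hA : 2/ε + 5 ≤ A) (hA0 : 0 < A)
    (hT1 : 1 ≤ T) (hTK : T ≤ K)
    (hTT : T * T = nR * (A * A)) (hTn : T ≤ nR * A)
    (hlogn : Real.log nR ≤ A/ε) :
    nR * Real.exp (-(K * (K - 1)) / (2 * nR)) ≤ (1/2) * Real.exp (-A) := by
  have hn0 : (0:ℝ) < nR := lt_of_lt_of_le one_pos hnR
  have h1 : T * T - T ≤ K * (K - 1) := by nlinarith [hTK, hT1]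
  have h2 : nR * (A * A) - nR * A ≤ T * T - T := by
    have := hTT; linarith [hTn]
  have hkk : (A * A - A)/2 ≤ (K * (K - 1)) / (2 * nR) := by
    rw [div_le_div_iff₀ (by norm_num) (by positivity)]
    nlinarith [h1, h2]
  have hlog2 : Real.log 2 ≤ 1 := by
    have := Real.log_le_sub_one_of_pos (show (0:ℝ) < 2 by norm_num); linarith
  have hA5 : 5 ≤ A := by
    have : 0 < 2/ε := by positivity
    linarith
  have hln : Real.log 2 + Real.log nR + A ≤ (K * (K - 1)) / (2 * nR) := by
    have hprod : A * (2/ε + 5) ≤ A * A := mul_le_mul_of_nonneg_left hA hA0.le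
    have hlogn' : Real.log nR ≤ (1/ε) * A := by
      have : A/ε = (1/ε) * A := by ring
      linarith
    have hstep : Real.log 2 + Real.log nR + A ≤ (A * A - A)/2 := by
      have he : A * (2/ε) = 2 * ((1/ε) * A) := by ring
      nlinarith [hprod, hlogn', hlog2, hA5]
    exact le_trans hstep hkk
  have h2n : (2:ℝ) * nR ≤ Real.exp ((K * (K - 1)) / (2 * nR) - A) := by
    calc (2:ℝ) * nR = Real.exp (Real.log (2 * nR)) :=
          (Real.exp_log (by positivity)).symm
      _ ≤ Real.exp ((K * (K - 1)) / (2 * nR) - A) := by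
          apply Real.exp_le_exp.2
          rw [Real.log_mul two_ne_zero (ne_of_gt hn0)]
          linarith
  have hmul := mul_le_mul_of_nonneg_right h2n
    (Real.exp_pos (-((K * (K - 1)) / (2 * nR)))).le
  rw [← Real.exp_add] at hmul
  have harg : (K * (K - 1)) / (2 * nR) - A + (-((K * (K - 1)) / (2 * nR))) = -A := by ring
  rw [harg] at hmul
  rw [neg_div]
  nlinarith [hmul]

end CycAuxSection

/-- For any `ε > 0`, for all `n` large enough, the probability that a uniform random
mapping on `[n]` has at least `n^(1/2+ε)` cyclic points is at most `(1/2)·exp(-n^ε)`. -/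
theorem uniform_mapping_cyclic_points_bound (ε : ℝ) (hε : 0 < ε) :
    ∃ N : ℕ, ∀ n ≥ N,
      (((Finset.univ : Finset (Fin n → Fin n)).filter
          (fun f => ((cyclicPts f).card : ℝ) ≥ (n : ℝ) ^ ((1 : ℝ)/2 + ε))).card : ℝ)
        / (Fintype.card (Fin n → Fin n) : ℝ)
        ≤ (1/2) * Real.exp (-(n : ℝ) ^ ε) := by
  obtain ⟨N₀, hN₀⟩ := Filter.eventually_atTop.1
    (((tendsto_rpow_atTop hε).comp
      tendsto_natCast_atTop_atTop).eventually_ge_atTop (2/ε + 5))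
  refine ⟨max N₀ 2, fun n hn => ?_⟩
  have hn2 : 2 ≤ n := le_trans (le_max_right _ _) hn
  have hnN : N₀ ≤ n := le_trans (le_max_left _ _) hn
  have hn0 : 0 < n := by omega
  have hnR : (0:ℝ) < n := by exact_mod_cast hn0
  have hA : 2/ε + 5 ≤ (n:ℝ)^ε := hN₀ n hnN
  have hA0 : 0 < (n:ℝ)^ε := Real.rpow_pos_of_pos hnR ε
  have ht0 : 0 < (n:ℝ)^((1:ℝ)/2+ε) := Real.rpow_pos_of_pos hnR _
  set k := ⌈(n:ℝ)^((1:ℝ)/2+ε)⌉₊ with hkdef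
  have hk1 : 0 < k := Nat.ceil_pos.2 ht0
  have hfilter : ((Finset.univ : Finset (Fin n → Fin n)).filter
        (fun f => ((cyclicPts f).card : ℝ) ≥ (n : ℝ) ^ ((1 : ℝ)/2 + ε)))
      ⊆ Finset.univ.filter (fun f => k ≤ (cyclicPts f).card) := by
    intro f hf
    rw [Finset.mem_filter] at *
    exact ⟨hf.1, Nat.ceil_le.2 hf.2⟩
  by_cases hkn : k ≤ n
  · -- main case
    have hcardle : (((Finset.univ : Finset (Fin n → Fin n)).filter
          (fun f => ((cyclicPts f).card : ℝ) ≥ (n : ℝ) ^ ((1 : ℝ)/2 + ε))).card)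
        ≤ n.descFactorial k * (n * n ^ (n - k)) :=
      le_trans (Finset.card_le_card hfilter) (CycAux.count_le k hk1 hkn)
    have hdenom : (Fintype.card (Fin n → Fin n) : ℝ) = (n:ℝ)^n := by
      rw [Fintype.card_fun, Fintype.card_fin]; push_cast; rfl
    have hpow : (n:ℝ)^n = (n:ℝ)^k * (n:ℝ)^(n-k) := by
      rw [← pow_add]; congr 1; omega
    have hdesc := CycAux.descFactorial_le_exp n k hkn hn0
    have main1 : (((Finset.univ : Finset (Fin n → Fin n)).filter
          (fun f => ((cyclicPts f).card : ℝ) ≥ (n : ℝ) ^ ((1 : ℝ)/2 + ε))).card : ℝ)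
          / (Fintype.card (Fin n → Fin n) : ℝ)
        ≤ (n:ℝ) * Real.exp (-((k:ℝ) * ((k:ℝ) - 1)) / (2 * n)) := by
      rw [hdenom]
      have hnum : (((Finset.univ : Finset (Fin n → Fin n)).filter
            (fun f => ((cyclicPts f).card : ℝ) ≥ (n : ℝ) ^ ((1 : ℝ)/2 + ε))).card : ℝ)
          ≤ (n.descFactorial k : ℝ) * ((n:ℝ) * (n:ℝ)^(n-k)) := by
        exact_mod_cast hcardle
      calc (((Finset.univ : Finset (Fin n → Fin n)).filter
            (fun f => ((cyclicPts f).card : ℝ) ≥ (n : ℝ) ^ ((1 : ℝ)/2 + ε))).card : ℝ)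
            / ((n:ℝ)^n)
          ≤ ((n.descFactorial k : ℝ) * ((n:ℝ) * (n:ℝ)^(n-k))) / ((n:ℝ)^n) := by gcongr
        _ ≤ (((n:ℝ)^k * Real.exp (-((k:ℝ) * ((k:ℝ) - 1)) / (2 * n)))
              * ((n:ℝ) * (n:ℝ)^(n-k))) / ((n:ℝ)^n) := by gcongr
        _ = (n:ℝ) * Real.exp (-((k:ℝ) * ((k:ℝ) - 1)) / (2 * n)) := by
            rw [hpow]
            have hne : (n:ℝ) ≠ 0 := ne_of_gt hnR
            field_simp
    have main2 : (n:ℝ) * Real.exp (-((k:ℝ) * ((k:ℝ) - 1)) / (2 * n))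
        ≤ (1/2) * Real.exp (-(n:ℝ)^ε) := by
      have hkt : (n:ℝ)^((1:ℝ)/2+ε) ≤ (k:ℝ) := Nat.le_ceil _
      have hn1 : (1:ℝ) ≤ n := by exact_mod_cast hn0
      have ht1 : 1 ≤ (n:ℝ)^((1:ℝ)/2+ε) := Real.one_le_rpow hn1 (by positivity)
      have htt : (n:ℝ)^((1:ℝ)/2+ε) * (n:ℝ)^((1:ℝ)/2+ε) = (n:ℝ) * ((n:ℝ)^ε * (n:ℝ)^ε) := by
        calc (n:ℝ)^((1:ℝ)/2+ε) * (n:ℝ)^((1:ℝ)/2+ε)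
            = (n:ℝ)^(((1:ℝ)/2+ε)+((1:ℝ)/2+ε)) := (Real.rpow_add hnR _ _).symm
          _ = (n:ℝ)^((1:ℝ)+(ε+ε)) := by congr 1; ring
          _ = (n:ℝ)^(1:ℝ) * ((n:ℝ)^ε * (n:ℝ)^ε) := by
              rw [Real.rpow_add hnR, Real.rpow_add hnR]
          _ = (n:ℝ) * ((n:ℝ)^ε * (n:ℝ)^ε) := by rw [Real.rpow_one]
      have htn : (n:ℝ)^((1:ℝ)/2+ε) ≤ (n:ℝ) * (n:ℝ)^ε := by
        calc (n:ℝ)^((1:ℝ)/2+ε) ≤ (n:ℝ)^((1:ℝ)+ε) :=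
              Real.rpow_le_rpow_of_exponent_le hn1 (by linarith)
          _ = (n:ℝ) * (n:ℝ)^ε := by rw [Real.rpow_add hnR, Real.rpow_one]
      have hlogn : Real.log n ≤ (n:ℝ)^ε/ε := Real.log_le_rpow_div hnR.le hε
      exact CycAux.arith_main ε (n:ℝ) ((n:ℝ)^ε) ((n:ℝ)^((1:ℝ)/2+ε)) (k:ℝ)
        hε hn1 hA hA0 ht1 hkt htt htn hlogn
    exact le_trans main1 main2
  · -- degenerate case: the filter is empty
    have hempty : ((Finset.univ : Finset (Fin n → Fin n)).filter
        (fun f => ((cyclicPts f).card : ℝ) ≥ (n : ℝ) ^ ((1 : ℝ)/2 + ε))) = ∅ := by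
      rw [Finset.filter_eq_empty_iff]
      intro f _
      have h1 : ((cyclicPts f).card : ℝ) ≤ n := by
        exact_mod_cast CycAux.card_cyclic_le f
      have h2 : (n:ℝ) < (n:ℝ)^((1:ℝ)/2+ε) := Nat.lt_ceil.1 (by omega)
      simp only [ge_iff_le, not_le]
      linarith
    rw [hempty]
    simp only [Finset.card_empty, Nat.cast_zero, zero_div]
    positivity
end

section
/- Fix a real number ε > 0. For all n large enough, the probability that a uniform random mapping on [n] has height at least ⌈n^{1/2+ε}⌉ is at most (1/2)·exp(−n^ε). -/
open Classical

open Finset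

lemma heightOf_le_of_eq {n : ℕ} (f : Fin n → Fin n) (x : Fin n) {i j : ℕ} (hij : i < j)
    (h : f^[i] x = f^[j] x) : heightOf f x ≤ i := by
  apply Nat.sInf_le
  refine ⟨j - i, by omega, ?_⟩
  rw [← Function.iterate_add_apply]
  rw [show j - i + i = j by omega, ← h]

lemma traj_inj {n : ℕ} {f : Fin n → Fin n} {x : Fin n} {m : ℕ} (h : m ≤ heightOf f x) :
    Function.Injective (fun i : Fin (m+1) => f^[(i : ℕ)] x) := by
  intro i j hij
  by_contra hne
  simp only at hij
  rcases lt_trichotomy (i : ℕ) (j : ℕ) with hlt | heq | hgt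
  · have := heightOf_le_of_eq f x hlt hij
    omega
  · exact hne (Fin.ext heq)
  · have := heightOf_le_of_eq f x hgt hij.symm
    omega

lemma card_inj_filter (n m : ℕ) :
    ((univ : Finset (Fin m → Fin n)).filter Function.Injective).card = n.descFactorial m := by
  rw [← Fintype.card_subtype]
  rw [Fintype.card_congr (Equiv.subtypeInjectiveEquivEmbedding (Fin m) (Fin n))]
  rw [Fintype.card_embedding_eq, Fintype.card_fin, Fintype.card_fin]

lemma card_traj_le (n m : ℕ) (x : Fin n) :
    ((univ : Finset (Fin n → Fin n)).filter
        (fun f => Function.Injective fun i : Fin (m+1) => f^[(i : ℕ)] x)).card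
      ≤ n.descFactorial m * n ^ (n - m) := by
  classical
  have hcard : (((univ : Finset (Fin m → Fin n)).filter Function.Injective) ×ˢ
      (univ : Finset (Fin (n - m) → Fin n))).card = n.descFactorial m * n ^ (n - m) := by
    rw [Finset.card_product, card_inj_filter]
    simp [Finset.card_univ]
  rw [← hcard]
  set A : (Fin n → Fin n) → Finset (Fin n) :=
    fun f => Finset.image (fun i : Fin m => f^[(i : ℕ)] x) univ with hA
  apply Finset.card_le_card_of_injOn
    (fun f => (fun i : Fin m => f^[(i : ℕ) + 1] x,
      fun j : Fin (n - m) => f (((A f)ᶜ.sort (· ≤ ·)).getD j x)))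
  · -- maps into
    intro f hf
    simp only [Finset.mem_coe, Finset.mem_filter, Finset.mem_univ, true_and] at hf
    simp only [Finset.mem_coe, Finset.mem_product, Finset.mem_filter, Finset.mem_univ, true_and, and_true]
    intro i j hij
    have := hf (a₁ := ⟨(i : ℕ) + 1, by omega⟩) (a₂ := ⟨(j : ℕ) + 1, by omega⟩) (by simpa using hij)
    simpa [Fin.ext_iff] using this
  · -- injective on
    intro f hf g hg hfg
    simp only [Finset.mem_coe, Finset.mem_filter, Finset.mem_univ, true_and] at hf hg
    have h1 := congrArg Prod.fst hfg
    have h2 := congrArg Prod.snd hfg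
    simp only at h1 h2
    have htraj : ∀ i : ℕ, i ≤ m → f^[i] x = g^[i] x := by
      intro i hi
      induction i with
      | zero => rfl
      | succ k ih =>
        have hk : k < m := by omega
        have := congrFun h1 ⟨k, hk⟩
        simpa using this
    have hAeq : A f = A g := by
      simp only [hA]
      apply Finset.image_congr
      intro i _
      exact htraj i (le_of_lt i.isLt)
    have hinjf : Function.Injective (fun i : Fin m => f^[(i : ℕ)] x) := by
      intro i j hij
      have := hf (a₁ := ⟨(i : ℕ), by omega⟩) (a₂ := ⟨(j : ℕ), by omega⟩) (by simpa using hij)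
      simpa [Fin.ext_iff] using this
    have hcardA : (A f).card = m := by
      rw [hA]
      rw [Finset.card_image_of_injective _ hinjf, Finset.card_univ, Fintype.card_fin]
    have hlen : ((A f)ᶜ.sort (· ≤ ·)).length = n - m := by
      rw [Finset.length_sort, Finset.card_compl, hcardA, Fintype.card_fin]
    funext y
    by_cases hy : y ∈ A f
    · simp only [hA, Finset.mem_image, Finset.mem_univ, true_and] at hy
      obtain ⟨i, hi⟩ := hy
      have e1 : f y = f^[(i : ℕ) + 1] x := by
        rw [← hi, ← Function.iterate_succ_apply' f (i : ℕ) x]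
      have e2 : g y = g^[(i : ℕ) + 1] x := by
        have : y = g^[(i : ℕ)] x := by rw [← hi]; exact htraj _ (le_of_lt i.isLt)
        rw [this, ← Function.iterate_succ_apply' g (i : ℕ) x]
      rw [e1, e2]
      exact htraj _ (by omega)
    · have hymem : y ∈ (A f)ᶜ.sort (· ≤ ·) := by
        rw [Finset.mem_sort]
        simpa using hy
      obtain ⟨⟨j, hj⟩, hjy⟩ := List.mem_iff_get.mp hymem
      have hjlt : j < n - m := by rwa [hlen] at hj
      have hgetD : ((A f)ᶜ.sort (· ≤ ·)).getD j x = y := by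
        rw [List.getD_eq_getElem _ _ hj, ← hjy]; rfl
      have := congrFun h2 ⟨j, hjlt⟩
      simp only at this
      rw [← hgetD, this, hAeq]

lemma card_height_le (n m : ℕ) (hm : 0 < m) :
    ((univ : Finset (Fin n → Fin n)).filter (fun f => height f ≥ m)).card
      ≤ n * (n.descFactorial m * n ^ (n - m)) := by
  classical
  have hsub : (univ : Finset (Fin n → Fin n)).filter (fun f => height f ≥ m) ⊆
      univ.biUnion (fun x : Fin n => (univ : Finset (Fin n → Fin n)).filter
        (fun f => Function.Injective fun i : Fin (m+1) => f^[(i : ℕ)] x)) := by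
    intro f hf
    simp only [Finset.mem_filter, Finset.mem_univ, true_and, ge_iff_le] at hf
    have : ∃ x ∈ (univ : Finset (Fin n)), m ≤ heightOf f x :=
      (Finset.le_sup_iff (show (⊥ : ℕ) < m from hm)).mp hf
    obtain ⟨x, -, hx⟩ := this
    rw [Finset.mem_biUnion]
    exact ⟨x, Finset.mem_univ x, by
      simp only [Finset.mem_filter, Finset.mem_univ, true_and]
      exact traj_inj hx⟩
  calc ((univ : Finset (Fin n → Fin n)).filter (fun f => height f ≥ m)).card
      ≤ _ := Finset.card_le_card hsub
    _ ≤ ∑ x : Fin n, ((univ : Finset (Fin n → Fin n)).filter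
        (fun f => Function.Injective fun i : Fin (m+1) => f^[(i : ℕ)] x)).card :=
      Finset.card_biUnion_le
    _ ≤ ∑ _x : Fin n, n.descFactorial m * n ^ (n - m) :=
      Finset.sum_le_sum (fun x _ => card_traj_le n m x)
    _ = n * (n.descFactorial m * n ^ (n - m)) := by
      rw [Finset.sum_const, Finset.card_univ, Fintype.card_fin, smul_eq_mul]

lemma descFactorial_le_real (n m : ℕ) (hn : 0 < n) :
    (n.descFactorial m : ℝ) ≤ (n : ℝ) ^ m * Real.exp (-((m : ℝ) * ((m : ℝ) - 1)) / (2 * n)) := by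
  have hnR : (0 : ℝ) < n := by exact_mod_cast hn
  rw [Nat.descFactorial_eq_prod_range, Nat.cast_prod]
  have hfac : ∀ i ∈ Finset.range m, ((n - i : ℕ) : ℝ) ≤ (n : ℝ) * Real.exp (-((i : ℝ) / n)) := by
    intro i _
    by_cases hi : i ≤ n
    · rw [Nat.cast_sub hi]
      have h1 : (1 : ℝ) - (i : ℝ) / n ≤ Real.exp (-((i : ℝ) / n)) := by
        have := Real.add_one_le_exp (-((i : ℝ) / n))
        linarith
      have : (n : ℝ) * (1 - (i : ℝ) / n) ≤ (n : ℝ) * Real.exp (-((i : ℝ) / n)) :=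
        mul_le_mul_of_nonneg_left h1 (le_of_lt hnR)
      calc (n : ℝ) - i = (n : ℝ) * (1 - (i : ℝ) / n) := by field_simp
        _ ≤ _ := this
    · have : n - i = 0 := by omega
      rw [this]
      simp only [Nat.cast_zero]
      positivity
  calc (∏ i ∈ Finset.range m, ((n - i : ℕ) : ℝ))
      ≤ ∏ i ∈ Finset.range m, ((n : ℝ) * Real.exp (-((i : ℝ) / n))) := by
        apply Finset.prod_le_prod (fun i _ => by positivity) hfac
    _ = (n : ℝ) ^ m * Real.exp (∑ i ∈ Finset.range m, (-((i : ℝ) / n))) := by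
        rw [Finset.prod_mul_distrib, Finset.prod_const, Finset.card_range, Real.exp_sum]
    _ = (n : ℝ) ^ m * Real.exp (-((m : ℝ) * ((m : ℝ) - 1)) / (2 * n)) := by
        congr 1
        have hsum : (∑ i ∈ Finset.range m, (i : ℝ)) = (m : ℝ) * ((m : ℝ) - 1) / 2 := by
          clear hfac
          induction m with
          | zero => simp
          | succ k ih =>
            rw [Finset.sum_range_succ, ih]
            push_cast
            ring
        have h' : ∀ i : ℕ, -((i : ℝ) / n) = (i : ℝ) * (-(1 : ℝ) / n) := fun i => by ring
        simp_rw [h']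
        rw [← Finset.sum_mul, hsum]
        ring

lemma rpow_isLittleO {a b : ℝ} (hab : a < b) :
    (fun x : ℝ => x ^ a) =o[Filter.atTop] (fun x : ℝ => x ^ b) := by
  rw [Asymptotics.isLittleO_iff_tendsto']
  · have h : Filter.Tendsto (fun x : ℝ => x ^ (a - b)) Filter.atTop (nhds 0) := by
      have := tendsto_rpow_neg_atTop (by linarith : (0 : ℝ) < b - a)
      refine this.congr' ?_
      filter_upwards [Filter.eventually_ge_atTop (0:ℝ)] with x hx
      rw [neg_sub]
    refine h.congr' ?_
    filter_upwards [Filter.eventually_gt_atTop (0:ℝ)] with x hx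
    rw [Real.rpow_sub hx]
  · filter_upwards [Filter.eventually_gt_atTop (0:ℝ)] with x hx h
    exact absurd h (Real.rpow_pos_of_pos hx b).ne'

/-- For any `ε > 0`, for all `n` large enough, the probability that a uniform random
mapping on `[n]` has height at least `⌈n^(1/2+ε)⌉` is at most `(1/2)·exp(-n^ε)`. -/
theorem uniform_mapping_height_bound (ε : ℝ) (hε : 0 < ε) :
    ∃ N : ℕ, ∀ n ≥ N,
      (((Finset.univ : Finset (Fin n → Fin n)).filter
          (fun f => height f ≥ ⌈(n : ℝ) ^ ((1 : ℝ)/2 + ε)⌉₊)).card : ℝ)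
        / (Fintype.card (Fin n → Fin n) : ℝ)
        ≤ (1/2) * Real.exp (-(n : ℝ) ^ ε) := by
  classical
  -- asymptotic smallness
  have h1 := rpow_isLittleO (show ε - 1/2 < 2*ε by linarith)
  have h2 := rpow_isLittleO (show ε < 2*ε by linarith)
  have h3 := isLittleO_log_rpow_atTop (show (0:ℝ) < 2*ε by linarith)
  have hsum := ((h1.const_mul_left ((1:ℝ)/2)).add (h2.add (h3.const_mul_left 2)))
  have hb := hsum.def (show (0:ℝ) < 1/2 by norm_num)
  have hPx : ∀ᶠ x : ℝ in Filter.atTop, (2 ≤ x ∧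
      (1/2) * x ^ (ε - 1/2) + (x ^ ε + 2 * Real.log x) ≤ (1/2) * x ^ (2*ε)) := by
    filter_upwards [hb, Filter.eventually_ge_atTop (2:ℝ)] with x hx h2x
    refine ⟨h2x, ?_⟩
    have hx0 : (0:ℝ) ≤ x := by linarith
    calc (1/2) * x ^ (ε - 1/2) + (x ^ ε + 2 * Real.log x)
        ≤ |(1/2) * x ^ (ε - 1/2) + (x ^ ε + 2 * Real.log x)| := le_abs_self _
      _ ≤ (1/2) * ‖x ^ (2*ε)‖ := by simpa [Real.norm_eq_abs] using hx
      _ = (1/2) * x ^ (2*ε) := by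
          rw [Real.norm_eq_abs, abs_of_nonneg (Real.rpow_nonneg hx0 _)]
  have hPn : ∀ᶠ k : ℕ in Filter.atTop, (2 ≤ (k:ℝ) ∧
      (1/2) * (k:ℝ) ^ (ε - 1/2) + ((k:ℝ) ^ ε + 2 * Real.log k) ≤ (1/2) * (k:ℝ) ^ (2*ε)) :=
    tendsto_natCast_atTop_atTop.eventually hPx
  obtain ⟨N, hN⟩ := Filter.eventually_atTop.mp hPn
  refine ⟨N, fun n hn => ?_⟩
  obtain ⟨hn2, hineq⟩ := hN n hn
  set m := ⌈(n : ℝ) ^ ((1 : ℝ)/2 + ε)⌉₊ with hmdef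
  set s := (n : ℝ) ^ ((1 : ℝ)/2 + ε) with hsdef
  have hnR : (0:ℝ) < n := by linarith
  have hn1 : (1:ℝ) ≤ n := by linarith
  have hs1 : (1:ℝ) ≤ s := Real.one_le_rpow hn1 (by linarith)
  have hm1 : 0 < m := Nat.ceil_pos.mpr (by linarith)
  have hms : s ≤ (m:ℝ) := Nat.le_ceil _
  have hdenom : (Fintype.card (Fin n → Fin n) : ℝ) = (n:ℝ) ^ (n:ℕ) := by
    rw [Fintype.card_fun, Fintype.card_fin]
    push_cast
    ring
  have hpow_pos : (0:ℝ) < (n:ℝ) ^ (n:ℕ) := by positivity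
  have hcard := card_height_le n m hm1
  rcases le_or_gt m n with hmn | hmn
  · -- main case m ≤ n
    set X := ((m:ℝ) * ((m:ℝ) - 1)) / (2 * n) with hXdef
    have hdesc := descFactorial_le_real n m (by exact_mod_cast hnR)
    have hprod : (n:ℝ) ^ m * (n:ℝ) ^ (n - m) = (n:ℝ) ^ (n:ℕ) := by
      rw [← pow_add]
      congr 1
      omega
    have hstep : (((Finset.univ : Finset (Fin n → Fin n)).filter
          (fun f => height f ≥ m)).card : ℝ) / (Fintype.card (Fin n → Fin n) : ℝ)
        ≤ (n:ℝ) * Real.exp (-X) := by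
      rw [hdenom, div_le_iff₀ hpow_pos]
      calc (((Finset.univ : Finset (Fin n → Fin n)).filter
            (fun f => height f ≥ m)).card : ℝ)
          ≤ (n:ℝ) * ((n.descFactorial m : ℝ) * (n:ℝ) ^ (n - m)) := by
            exact_mod_cast hcard
        _ ≤ (n:ℝ) * (((n:ℝ) ^ m * Real.exp (-((m:ℝ) * ((m:ℝ) - 1)) / (2 * n))) * (n:ℝ) ^ (n - m)) := by
            have hpnm : (0:ℝ) ≤ (n:ℝ) ^ (n - m) := by positivity
            have := mul_le_mul_of_nonneg_right hdesc hpnm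
            exact mul_le_mul_of_nonneg_left this (le_of_lt hnR)
        _ = (n:ℝ) * Real.exp (-X) * (n:ℝ) ^ (n:ℕ) := by
            rw [← hprod, hXdef]
            ring_nf
    refine hstep.trans ?_
    -- now show n * exp(-X) ≤ (1/2) * exp(-n^ε)
    have e1 : s * s = (n:ℝ) * (n:ℝ) ^ (2*ε) := by
      rw [hsdef, ← Real.rpow_add hnR]
      nth_rewrite 2 [← Real.rpow_one (n:ℝ)]
      rw [← Real.rpow_add hnR]
      congr 1
      ring
    have e2 : s = (n:ℝ) * (n:ℝ) ^ (ε - 1/2) := by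
      rw [hsdef]
      nth_rewrite 2 [← Real.rpow_one (n:ℝ)]
      rw [← Real.rpow_add hnR]
      congr 1
      ring
    have hXge : (1/2) * (n:ℝ) ^ (2*ε) - (1/2) * (n:ℝ) ^ (ε - 1/2) ≤ X := by
      have hss : s * (s - 1) ≤ (m:ℝ) * ((m:ℝ) - 1) := by
        apply mul_le_mul hms (by linarith) (by linarith) (by positivity)
      have h2n : (0:ℝ) < 2 * n := by linarith
      have : s * (s - 1) / (2 * n) ≤ X := by
        rw [hXdef]
        exact div_le_div_of_nonneg_right hss h2n.le
      have heq : s * (s - 1) / (2 * n) = (1/2) * (n:ℝ) ^ (2*ε) - (1/2) * (n:ℝ) ^ (ε - 1/2) := by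
        have expand : s * (s - 1) = s * s - s := by ring
        rw [expand, e1]
        rw [e2]
        field_simp
      linarith
    have hXbig : (n:ℝ) ^ ε + 2 * Real.log n ≤ X := by linarith
    have hlog2 : Real.log 2 ≤ Real.log n := Real.log_le_log (by norm_num) hn2
    have h2n_le : (2:ℝ) * n ≤ Real.exp (X - (n:ℝ) ^ ε) := by
      have hlog : Real.log (2 * n) ≤ X - (n:ℝ) ^ ε := by
        rw [Real.log_mul (by norm_num) hnR.ne']
        linarith
      calc (2:ℝ) * n = Real.exp (Real.log (2 * n)) := by
            rw [Real.exp_log (by linarith)]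
        _ ≤ Real.exp (X - (n:ℝ) ^ ε) := Real.exp_le_exp.mpr hlog
    have hid : Real.exp (X - (n:ℝ) ^ ε) * Real.exp (-X) = Real.exp (-(n:ℝ) ^ ε) := by
      rw [← Real.exp_add]
      ring_nf
    have hE : (0:ℝ) < Real.exp (-X) := Real.exp_pos _
    nlinarith [mul_le_mul_of_nonneg_right h2n_le (le_of_lt hE)]
  · -- degenerate case n < m
    have hzero : n.descFactorial m = 0 := Nat.descFactorial_eq_zero_iff_lt.mpr hmn
    have : ((Finset.univ : Finset (Fin n → Fin n)).filter (fun f => height f ≥ m)).card = 0 := by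
      rw [hzero] at hcard
      simpa using hcard
    rw [this]
    simp only [Nat.cast_zero, zero_div]
    positivity
end

section
/- Let n and ℓ be positive integers with ℓ ≤ n and let p be any probability mass function on [n]. For a random p-mapping f on [n], the probability that f has a cycle of length ℓ — that is, that there exist pairwise distinct elements x_1, …, x_ℓ of [n] with f(x_j) = x_{j+1} for 1 ≤ j < ℓ and f(x_ℓ) = x_1 — is at most ℓ! · C(n, ℓ) · n^{−ℓ}, the same bound as in the uniform case. -/
open Finset



lemma amgm_aux1 (k : ℕ) (u : ℝ) (hu : 0 ≤ u) :
    ((k : ℝ) + 1) * u ^ k - (k : ℝ) * u ^ (k + 1) ≤ 1 := by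
  induction k with
  | zero => simp
  | succ k ih =>
    have h1 : 0 ≤ ((k : ℝ) + 1) * (u ^ k * (u - 1) ^ 2) := by positivity
    have hid : ((k : ℝ) + 1 + 1) * u ^ (k + 1) - ((k : ℝ) + 1) * u ^ (k + 1 + 1)
        = (((k : ℝ) + 1) * u ^ k - (k : ℝ) * u ^ (k + 1))
          - ((k : ℝ) + 1) * (u ^ k * (u - 1) ^ 2) := by ring
    push_cast
    rw [hid]
    linarith

lemma amgm_aux2 (k : ℕ) (x y m : ℝ) (hx : 0 ≤ x) (hy : 0 ≤ y)
    (h : (k : ℝ) * x + y = ((k : ℝ) + 1) * m) : x ^ k * y ≤ m ^ (k + 1) := by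
  have hk : (0:ℝ) ≤ (k : ℝ) := Nat.cast_nonneg k
  have hm : 0 ≤ m := by nlinarith [mul_nonneg hk hx]
  rcases eq_or_lt_of_le hm with hm0 | hm0
  · have hy0 : y = 0 := by nlinarith [mul_nonneg hk hx]
    rw [hy0, ← hm0]
    simp
  · set u : ℝ := x / m with hu
    have hm' : m ≠ 0 := ne_of_gt hm0
    have hxu : x = u * m := by rw [hu]; field_simp
    have hyu : y = m * (((k : ℝ) + 1) - (k : ℝ) * u) := by
      have : (k : ℝ) * (u * m) + y = ((k : ℝ) + 1) * m := by rw [← hxu]; exact h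
      nlinarith [this]
    have hun : 0 ≤ u := div_nonneg hx hm
    have key := amgm_aux1 k u hun
    calc x ^ k * y = m ^ (k+1) * (((k : ℝ) + 1) * u ^ k - (k : ℝ) * u ^ (k + 1)) := by
          rw [hxu, hyu]; ring
    _ ≤ m ^ (k+1) * 1 := mul_le_mul_of_nonneg_left key (by positivity)
    _ = m ^ (k+1) := by ring


lemma esymm_sum_nonneg {ι : Type*} (s : Finset ι) (p : ι → ℝ) (hp : ∀ i, 0 ≤ p i) (ℓ : ℕ) :
    0 ≤ ∑ S ∈ s.powersetCard ℓ, ∏ i ∈ S, p i :=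
  Finset.sum_nonneg fun S _ => Finset.prod_nonneg fun i _ => hp i

lemma maclaurin {ι : Type*} [DecidableEq ι] (s : Finset ι) (p : ι → ℝ) (hp : ∀ i, 0 ≤ p i) :
    ∀ ℓ : ℕ, ∑ S ∈ s.powersetCard ℓ, ∏ i ∈ S, p i
      ≤ (s.card.choose ℓ : ℝ) * (∑ i ∈ s, p i) ^ ℓ / (s.card : ℝ) ^ ℓ := by
  induction s using Finset.cons_induction with
  | empty =>
    intro ℓ
    cases ℓ with
    | zero => simp
    | succ k =>
      rw [Finset.powersetCard_eq_empty.mpr (by simp)]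
      simp
  | cons a s ha ih =>
    intro ℓ
    cases ℓ with
    | zero => simp
    | succ k =>
      -- split the sum
      have hins : (Finset.cons a s ha) = insert a s := by rw [Finset.cons_eq_insert]
      rw [hins, Finset.powersetCard_succ_insert ha]
      have hdisj : Disjoint (s.powersetCard (k+1)) ((s.powersetCard k).image (insert a)) := by
        rw [Finset.disjoint_left]
        intro S hS hS'
        obtain ⟨T, hT, rfl⟩ := Finset.mem_image.mp hS'
        have : a ∈ s := (Finset.mem_powersetCard.mp hS).1 (Finset.mem_insert_self a T)
        exact ha this
      rw [Finset.sum_union hdisj]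
      have himg : ∑ S ∈ (s.powersetCard k).image (insert a), ∏ i ∈ S, p i
          = p a * ∑ S ∈ s.powersetCard k, ∏ i ∈ S, p i := by
        rw [Finset.sum_image, Finset.mul_sum]
        · apply Finset.sum_congr rfl
          intro S hS
          have haS : a ∉ S := fun h => ha ((Finset.mem_powersetCard.mp hS).1 h)
          rw [Finset.prod_insert haS]
        · intro S hS T hT hST
          have haS : a ∉ S := fun h => ha ((Finset.mem_powersetCard.mp hS).1 h)
          have haT : a ∉ T := fun h => ha ((Finset.mem_powersetCard.mp hT).1 h)
          rw [← Finset.erase_insert haS, ← Finset.erase_insert haT, hST]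
      rw [himg]
      rw [Finset.card_insert_of_notMem ha, Finset.sum_insert ha]
      set m := s.card with hm
      set s1 := ∑ i ∈ s, p i with hs1
      set t := p a with ht
      have hE1 := ih (k+1)
      have hE0 := ih k
      have hE1n := esymm_sum_nonneg s p hp (k+1)
      have hE0n := esymm_sum_nonneg s p hp k
      set E1 := ∑ S ∈ s.powersetCard (k+1), ∏ i ∈ S, p i
      set E0 := ∑ S ∈ s.powersetCard k, ∏ i ∈ S, p i
      have htn : 0 ≤ t := hp a
      have hs1n : 0 ≤ s1 := Finset.sum_nonneg fun i _ => hp i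
      rcases le_or_gt k m with hkm | hkm
      · rcases Nat.eq_zero_or_pos m with hm0 | hm0
        · -- m = 0, so k = 0, s = ∅
          have hk0 : k = 0 := le_antisymm (hm0 ▸ hkm) (Nat.zero_le k)
          have hsE : s = ∅ := Finset.card_eq_zero.mp hm0
          subst hk0
          have hE1' : E1 = 0 := by
            simp only [E1, hsE]
            rw [Finset.powersetCard_eq_empty.mpr (by simp)]
            simp
          have hE0' : E0 = 0 + 1 := by simp [E0, hsE]
          have hs1' : s1 = 0 := by simp [hs1, hsE]
          rw [hE1', hE0', hs1', hm, hsE]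
          norm_num
        · -- main case: 1 ≤ m, k ≤ m
          have hmR : (0:ℝ) < m := by exact_mod_cast hm0
          have hmne : (m:ℝ) ≠ 0 := ne_of_gt hmR
          have hm1ne : ((m:ℝ) + 1) ≠ 0 := by positivity
          have hk1ne : ((k:ℝ) + 1) ≠ 0 := by positivity
          set aa := s1 / (m:ℝ) with haa
          have haan : 0 ≤ aa := div_nonneg hs1n (le_of_lt hmR)
          have hs1a : s1 = (m:ℝ) * aa := by rw [haa]; field_simp
          set bb := (((m:ℝ) - k) * aa + ((k:ℝ)+1) * t) / ((m:ℝ)+1) with hbb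
          have hmk : (0:ℝ) ≤ (m:ℝ) - k := by
            have : (k:ℝ) ≤ (m:ℝ) := by exact_mod_cast hkm
            linarith
          have hbbn : 0 ≤ bb := by
            apply div_nonneg _ (by linarith)
            have h1 : 0 ≤ ((m:ℝ) - k) * aa := mul_nonneg hmk haan
            have h2 : 0 ≤ ((k:ℝ)+1) * t := by positivity
            linarith
          have hcond : (k:ℝ) * aa + bb = ((k:ℝ) + 1) * ((s1 + t)/((m:ℝ)+1)) := by
            rw [hbb, hs1a]; field_simp; ring
          have key := amgm_aux2 k aa bb ((s1 + t)/((m:ℝ)+1)) haan hbbn hcond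
          -- choose identities
          have hc1 : ((m.choose (k+1) : ℕ) : ℝ) * ((k:ℝ)+1) = ((m.choose k : ℕ) : ℝ) * ((m:ℝ) - k) := by
            have := Nat.choose_succ_right_eq m k
            have hcast : ((m.choose (k+1) * (k+1) : ℕ) : ℝ) = ((m.choose k * (m - k) : ℕ) : ℝ) := by
              exact_mod_cast congrArg (Nat.cast (R := ℝ)) this
            push_cast [Nat.cast_sub hkm] at hcast
            linarith
          have hc2 : (((m+1).choose (k+1) : ℕ) : ℝ) * ((k:ℝ)+1) = ((m.choose k : ℕ) : ℝ) * ((m:ℝ)+1) := by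
            have := Nat.add_one_mul_choose_eq m k
            have hcast : (((m+1) * m.choose k : ℕ) : ℝ) = (((m+1).choose (k+1) * (k+1) : ℕ) : ℝ) := by
              exact_mod_cast congrArg (Nat.cast (R := ℝ)) this
            push_cast at hcast
            linarith
          calc E1 + (t * E0)
              ≤ (m.choose (k+1) : ℝ) * s1 ^ (k+1) / (m:ℝ) ^ (k+1)
                + t * ((m.choose k : ℝ) * s1 ^ k / (m:ℝ) ^ k) := by
                have := mul_le_mul_of_nonneg_left hE0 htn
                linarith
            _ = ((m.choose (k+1) : ℝ)) * aa ^ (k+1) + t * ((m.choose k : ℝ) * aa ^ k) := by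
                have haak : ∀ j : ℕ, aa ^ j = s1 ^ j / (m:ℝ) ^ j := fun j => by
                  rw [haa, div_pow]
                rw [haak, haak]
                ring
            _ = ((m.choose k : ℝ) * ((m:ℝ)+1) / ((k:ℝ)+1)) * (aa ^ k * bb) := by
                have hC : (m.choose (k+1) : ℝ) = (m.choose k : ℝ) * ((m:ℝ) - k)/((k:ℝ)+1) := by
                  field_simp
                  linarith [hc1]
                rw [hC, hbb]
                field_simp
                ring
            _ ≤ ((m.choose k : ℝ) * ((m:ℝ)+1) / ((k:ℝ)+1)) * ((s1 + t)/((m:ℝ)+1)) ^ (k+1) := by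
                apply mul_le_mul_of_nonneg_left key
                exact div_nonneg (mul_nonneg (Nat.cast_nonneg _) (by linarith)) (by have := (Nat.cast_nonneg k : (0:ℝ) ≤ k); linarith)
            _ = ((m+1).choose (k+1) : ℝ) * (s1 + t) ^ (k+1) / ((m:ℝ)+1) ^ (k+1) := by
                have hC2 : ((m+1).choose (k+1) : ℝ) = (m.choose k : ℝ) * ((m:ℝ)+1)/((k:ℝ)+1) := by
                  field_simp
                  linarith [hc2]
                rw [hC2, div_pow]
                field_simp
            _ = ((m+1).choose (k+1) : ℝ) * (t + s1) ^ (k+1) / ((m+1:ℕ):ℝ) ^ (k+1) := by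
                push_cast
                ring
      · -- k > m : everything is zero
        have h1 : s.powersetCard (k+1) = ∅ := Finset.powersetCard_eq_empty.mpr (by omega)
        have h0 : s.powersetCard k = ∅ := Finset.powersetCard_eq_empty.mpr (by omega)
        have hch : (m+1).choose (k+1) = 0 := Nat.choose_eq_zero_of_lt (by omega)
        simp [E1, E0, h1, h0, hch]

open Classical in
lemma tuple_prob (n ℓ : ℕ) (p : Fin n → ℝ) (hsum : ∑ i, p i = 1)
    (x : Fin ℓ → Fin n) (hx : Function.Injective x) (y : Fin ℓ → Fin n) :
    ∑ f ∈ (Finset.univ : Finset (Fin n → Fin n)).filter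
        (fun f => ∀ j, f (x j) = y j), ∏ i, p (f i) = ∏ j, p (y j) := by
  classical
  set C : Fin n → Finset (Fin n) :=
    fun i => if h : ∃ j, x j = i then {y h.choose} else Finset.univ with hC
  have hfilter : (Finset.univ : Finset (Fin n → Fin n)).filter
      (fun f => ∀ j, f (x j) = y j) = Fintype.piFinset C := by
    ext f
    simp only [Finset.mem_filter, Finset.mem_univ, true_and, Fintype.mem_piFinset]
    constructor
    · intro hf i
      rw [hC]
      by_cases h : ∃ j, x j = i
      · simp only [dif_pos h, Finset.mem_singleton]
        have hthis := hf h.choose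
        rw [h.choose_spec] at hthis
        exact hthis
      · simp [dif_neg h]
    · intro hf j
      have h : ∃ j', x j' = x j := ⟨j, rfl⟩
      have := hf (x j)
      rw [hC] at this
      simp only [dif_pos h, Finset.mem_singleton] at this
      rw [this]
      congr 1
      exact hx h.choose_spec
  rw [hfilter, ← Finset.prod_univ_sum]
  have hterm : ∀ i : Fin n, (∑ v ∈ C i, p v)
      = if h : ∃ j, x j = i then p (y h.choose) else 1 := by
    intro i
    rw [hC]
    by_cases h : ∃ j, x j = i
    · simp [dif_pos h]
    · simp [dif_neg h, hsum]
  rw [Finset.prod_congr rfl (fun i _ => hterm i)]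
  rw [← Finset.prod_subset (Finset.subset_univ (Finset.univ.image x))
    (fun i _ hi => by
      have h : ¬ ∃ j, x j = i := by
        intro ⟨j, hj⟩
        exact hi (Finset.mem_image.mpr ⟨j, Finset.mem_univ j, hj⟩)
      simp [dif_neg h])]
  rw [Finset.prod_image (fun a _ b _ h => hx h)]
  apply Finset.prod_congr rfl
  intro j _
  have h : ∃ j', x j' = x j := ⟨j, rfl⟩
  rw [dif_pos h]
  exact congrArg (fun z => p (y z)) (hx h.choose_spec)

lemma next_bijective (ℓ : ℕ) (hℓ : 0 < ℓ) :
    Function.Bijective (fun j : Fin ℓ => (⟨((j : ℕ) + 1) % ℓ, Nat.mod_lt _ hℓ⟩ : Fin ℓ)) := by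
  rw [Fintype.bijective_iff_injective_and_card]
  refine ⟨?_, rfl⟩
  intro a b h
  have h' : ((a : ℕ) + 1) % ℓ = ((b : ℕ) + 1) % ℓ := congrArg Fin.val h
  have ha := a.isLt
  have hb := b.isLt
  have hmod : ∀ c : ℕ, c < ℓ → (c + 1) % ℓ = if c + 1 = ℓ then 0 else c + 1 := by
    intro c hc
    split
    · simp_all
    · exact Nat.mod_eq_of_lt (by omega)
  rw [hmod _ ha, hmod _ hb] at h'
  apply Fin.ext
  split at h' <;> split at h' <;> omega

open Classical in
lemma fiber_card (n ℓ : ℕ) (S : Finset (Fin n)) (hS : S.card = ℓ) :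
    ((Finset.univ : Finset (Fin ℓ → Fin n)).filter
      (fun x => Function.Injective x ∧ Finset.univ.image x = S)).card = ℓ.factorial := by
  classical
  have hcard : ((Finset.univ : Finset (Fin ℓ → Fin n)).filter
      (fun x => Function.Injective x ∧ Finset.univ.image x = S)).card
      = (Finset.univ : Finset (Fin ℓ ↪ {a // a ∈ S})).card := by
    refine Finset.card_bij' (i := fun x hx =>
      (⟨fun j => (⟨x j, by
          have h := (Finset.mem_filter.mp hx).2.2
          rw [← h]
          exact Finset.mem_image.mpr ⟨j, Finset.mem_univ j, rfl⟩⟩ : {a // a ∈ S}),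
        fun a b hab => (Finset.mem_filter.mp hx).2.1 (congrArg Subtype.val hab)⟩ : Fin ℓ ↪ {a // a ∈ S}))
      (j := fun e _ => fun j => (e j : Fin n)) ?_ ?_ ?_ ?_
    · intro x hx
      exact Finset.mem_univ _
    · intro e he
      rw [Finset.mem_filter]
      refine ⟨Finset.mem_univ _, fun a b hab => e.injective (Subtype.ext hab), ?_⟩
      apply Finset.eq_of_subset_of_card_le
      · intro i hi
        obtain ⟨j, _, rfl⟩ := Finset.mem_image.mp hi
        exact (e j).2
      · rw [Finset.card_image_of_injective _ (fun a b hab => e.injective (Subtype.ext hab)),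
          Finset.card_univ, Fintype.card_fin, hS]
    · intro x hx
      rfl
    · intro e he
      ext j
      rfl

  rw [hcard, Finset.card_univ, Fintype.card_embedding_eq, Fintype.card_coe, hS,
    Fintype.card_fin, Nat.descFactorial_self]


open Classical in
lemma group_by_image (n ℓ : ℕ) (p : Fin n → ℝ) :
    ∑ x ∈ (Finset.univ : Finset (Fin ℓ → Fin n)).filter (fun x => Function.Injective x),
      ∏ j, p (x j)
    = (ℓ.factorial : ℝ) * ∑ S ∈ (Finset.univ : Finset (Fin n)).powersetCard ℓ, ∏ i ∈ S, p i := by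
  classical
  rw [← Finset.sum_fiberwise_of_maps_to (g := fun x : Fin ℓ → Fin n => Finset.univ.image x)
    (t := (Finset.univ : Finset (Fin n)).powersetCard ℓ)
    (fun x hx => by
      rw [Finset.mem_powersetCard]
      refine ⟨Finset.subset_univ _, ?_⟩
      rw [Finset.card_image_of_injective _ (Finset.mem_filter.mp hx).2, Finset.card_univ,
        Fintype.card_fin])]
  rw [Finset.mul_sum]
  apply Finset.sum_congr rfl
  intro S hS
  have hScard : S.card = ℓ := (Finset.mem_powersetCard.mp hS).2
  have hconst : ∀ x ∈ ((Finset.univ : Finset (Fin ℓ → Fin n)).filter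
      (fun x => Function.Injective x)).filter (fun x => Finset.univ.image x = S),
      ∏ j, p (x j) = ∏ i ∈ S, p i := by
    intro x hx
    rw [Finset.mem_filter, Finset.mem_filter] at hx
    obtain ⟨⟨-, hinj⟩, him⟩ := hx
    rw [← him, Finset.prod_image (fun a _ b _ h => hinj h)]
  rw [Finset.sum_congr rfl hconst, Finset.sum_const]
  rw [Finset.filter_filter]
  rw [fiber_card n ℓ S hScard]
  simp [nsmul_eq_mul]

lemma sum_biUnion_le'_s9 {ι α : Type*} [DecidableEq ι] [DecidableEq α] (X : Finset ι) (T : ι → Finset α)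
    (w : α → ℝ) (hw : ∀ a, 0 ≤ w a) :
    ∑ a ∈ X.biUnion T, w a ≤ ∑ x ∈ X, ∑ a ∈ T x, w a := by
  induction X using Finset.cons_induction with
  | empty => simp
  | cons x X hx ih =>
    rw [Finset.cons_eq_insert, Finset.biUnion_insert, Finset.sum_insert hx]
    have h1 : ∑ a ∈ T x ∪ X.biUnion T, w a + ∑ a ∈ (T x) ∩ X.biUnion T, w a
        = ∑ a ∈ T x, w a + ∑ a ∈ X.biUnion T, w a := Finset.sum_union_inter
    have h2 : 0 ≤ ∑ a ∈ (T x) ∩ X.biUnion T, w a := Finset.sum_nonneg fun a _ => hw a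
    linarith


open Classical

/-- For `0 < ℓ ≤ n` and any probability mass function `p` on `[n]`, the probability that
a random `p`-mapping on `[n]` has a cycle of length `ℓ` (pairwise distinct points
`x_1, …, x_ℓ` with `f(x_j) = x_{j+1}` cyclically) is at most `ℓ! · C(n,ℓ) · n^{-ℓ}`,
the same bound as in the uniform case. -/
theorem p_mapping_cycle_length_bound (n ℓ : ℕ) (hℓ : 0 < ℓ) (hn : ℓ ≤ n)
    (p : Fin n → ℝ) (hp : ∀ i, 0 ≤ p i) (hsum : ∑ i, p i = 1) :
    ∑ f ∈ (Finset.univ : Finset (Fin n → Fin n)).filter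
        (fun f => ∃ x : Fin ℓ → Fin n, Function.Injective x ∧
          ∀ j : Fin ℓ, f (x j) = x ⟨((j : ℕ) + 1) % ℓ, Nat.mod_lt _ hℓ⟩),
      ∏ i, p (f i)
    ≤ (ℓ.factorial : ℝ) * (n.choose ℓ : ℝ) / (n : ℝ) ^ ℓ := by
  classical
  set nxt : Fin ℓ → Fin ℓ := fun j => (⟨((j : ℕ) + 1) % ℓ, Nat.mod_lt _ hℓ⟩ : Fin ℓ) with hnxt
  set X : Finset (Fin ℓ → Fin n) :=
    Finset.univ.filter (fun x => Function.Injective x) with hX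
  set T : (Fin ℓ → Fin n) → Finset (Fin n → Fin n) :=
    fun x => Finset.univ.filter (fun f => ∀ j, f (x j) = x (nxt j)) with hT
  have hwn : ∀ f : Fin n → Fin n, 0 ≤ ∏ i, p (f i) :=
    fun f => Finset.prod_nonneg fun i _ => hp (f i)
  have hsub : (Finset.univ : Finset (Fin n → Fin n)).filter
        (fun f => ∃ x : Fin ℓ → Fin n, Function.Injective x ∧
          ∀ j : Fin ℓ, f (x j) = x ⟨((j : ℕ) + 1) % ℓ, Nat.mod_lt _ hℓ⟩)
      ⊆ X.biUnion T := by
    intro f hf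
    obtain ⟨x, hinj, hcond⟩ := (Finset.mem_filter.mp hf).2
    exact Finset.mem_biUnion.mpr ⟨x, Finset.mem_filter.mpr ⟨Finset.mem_univ _, hinj⟩,
      Finset.mem_filter.mpr ⟨Finset.mem_univ _, hcond⟩⟩
  have h1 := Finset.sum_le_sum_of_subset_of_nonneg hsub (fun f _ _ => hwn f)
  have h2 := sum_biUnion_le'_s9 X T (fun f => ∏ i, p (f i)) hwn
  have h3 : ∀ x ∈ X, ∑ f ∈ T x, ∏ i, p (f i) = ∏ j, p (x j) := by
    intro x hx
    have hinj : Function.Injective x := (Finset.mem_filter.mp hx).2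
    have e1 : ∑ f ∈ T x, ∏ i, p (f i) = ∏ j, p (x (nxt j)) :=
      tuple_prob n ℓ p hsum x hinj (fun j => x (nxt j))
    rw [e1]
    exact (next_bijective ℓ hℓ).prod_comp (fun j => p (x j))
  have h4 : ∑ x ∈ X, ∑ f ∈ T x, ∏ i, p (f i)
      = (ℓ.factorial : ℝ) * ∑ S ∈ (Finset.univ : Finset (Fin n)).powersetCard ℓ,
          ∏ i ∈ S, p i := by
    rw [Finset.sum_congr rfl h3]
    exact group_by_image n ℓ p
  have h5 := maclaurin (Finset.univ : Finset (Fin n)) p hp ℓ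
  rw [Finset.card_univ, Fintype.card_fin, hsum, one_pow] at h5
  have h6 : (ℓ.factorial : ℝ) * ∑ S ∈ (Finset.univ : Finset (Fin n)).powersetCard ℓ,
        ∏ i ∈ S, p i ≤ (ℓ.factorial : ℝ) * ((n.choose ℓ : ℝ) * 1 / (n : ℝ) ^ ℓ) := by
    apply mul_le_mul_of_nonneg_left _ (by positivity)
    calc ∑ S ∈ (Finset.univ : Finset (Fin n)).powersetCard ℓ, ∏ i ∈ S, p i
        ≤ (n.choose ℓ : ℝ) / (n : ℝ) ^ ℓ := by simpa using h5
      _ = (n.choose ℓ : ℝ) * 1 / (n : ℝ) ^ ℓ := by ring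
  calc ∑ f ∈ (Finset.univ : Finset (Fin n → Fin n)).filter
        (fun f => ∃ x : Fin ℓ → Fin n, Function.Injective x ∧
          ∀ j : Fin ℓ, f (x j) = x ⟨((j : ℕ) + 1) % ℓ, Nat.mod_lt _ hℓ⟩),
      ∏ i, p (f i) ≤ ∑ f ∈ X.biUnion T, ∏ i, p (f i) := h1
    _ ≤ ∑ x ∈ X, ∑ f ∈ T x, ∏ i, p (f i) := h2
    _ = (ℓ.factorial : ℝ) * ∑ S ∈ (Finset.univ : Finset (Fin n)).powersetCard ℓ,
          ∏ i ∈ S, p i := h4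
    _ ≤ (ℓ.factorial : ℝ) * ((n.choose ℓ : ℝ) * 1 / (n : ℝ) ^ ℓ) := h6
    _ = (ℓ.factorial : ℝ) * (n.choose ℓ : ℝ) / (n : ℝ) ^ ℓ := by ring
end
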